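/- arXiv:2601.15520 — 6 statements merged into one kernel-verified Lean document; each statement's English description precedes it below -/
import Mathlib

section
/- Let G = (V,E) be a finite graph and π a GEO for G, and let C = (V_C, E_C) be a connected component of G. Set k_-^C = min{π^{−1}(v) : v ∈ V_C} and k_+^C = max{π^{−1}(v) : v ∈ V_C}. Then: (i) V_C = ⟦k_-^C, k_+^C⟧_π; (ii) for every v ∈ V_C there exists a π-good path from π(k_-^C) to v. Conversely, if π is an ordering of V such that (i) and (ii) hold for every connected component of G, then π is a GEO for G. -/
open MeasureTheory ProbabilityTheory Filter

namespace PrimBip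

/-- Vertex set of the complete bipartite graph `K_{n_b,n_w}`:
black vertices are `Sum.inl`, white vertices are `Sum.inr`. -/
abbrev V (nb nw : ℕ) := Fin nb ⊕ Fin nw

def blacks (nb nw : ℕ) : Set (V nb nw) := Set.range Sum.inl

def whites (nb nw : ℕ) : Set (V nb nw) := Set.range Sum.inr

/-- Edge weights extended to pairs of vertices; non-edges get the junk value `2`. -/
def wt {nb nw : ℕ} (W : Fin nb → Fin nw → ℝ) : V nb nw → V nb nw → ℝ
  | Sum.inl b, Sum.inr w => W b w
  | Sum.inr w, Sum.inl b => W b w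
  | _, _ => 2

lemma wt_symm {nb nw : ℕ} (W : Fin nb → Fin nw → ℝ) (v v' : V nb nw) :
    wt W v v' = wt W v' v := by
  cases v <;> cases v' <;> rfl

/-- The a.s. properties of i.i.d. uniform edge weights: all weights lie in `(0,1)`
and are pairwise distinct. -/
def GoodWeights {nb nw : ℕ} (W : Fin nb → Fin nw → ℝ) : Prop :=
  (∀ b w, W b w ∈ Set.Ioo (0:ℝ) 1) ∧
    Function.Injective (fun bw : Fin nb × Fin nw => W bw.1 bw.2)

/-- `σ` (0-indexed: `σ 0` is the first vertex) is a Prim sequence for the weights `W`: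
it enumerates all the vertices, and at each step `k ≥ 1` the vertex `σ k` is an endpoint
of the minimal-weight edge joining `{σ 0, …, σ (k-1)}` to its complement. -/
def IsPrimSeq {nb nw : ℕ} (W : Fin nb → Fin nw → ℝ) (σ : ℕ → V nb nw) : Prop :=
  σ '' Set.Iio (nb + nw) = Set.univ ∧ Set.InjOn σ (Set.Iio (nb + nw)) ∧
    ∀ k, 0 < k → k < nb + nw →
      ∃ j < k, ∀ a b, a < k → k ≤ b → b < nb + nw →
        wt W (σ j) (σ k) ≤ wt W (σ a) (σ b)

/-- The Bernoulli bond percolation graph `G(n_b,n_w,p)`: keep exactly the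
(bipartite) edges of weight `≤ p`. -/
def percGraph {nb nw : ℕ} (W : Fin nb → Fin nw → ℝ) (p : ℝ) : SimpleGraph (V nb nw) where
  Adj v v' := v ≠ v' ∧ wt W v v' ≤ p
  symm := ⟨fun _ _ h => ⟨h.1.symm, by rw [wt_symm]; exact h.2⟩⟩
  loopless := ⟨fun _ h => h.1 rfl⟩

/-- 1-neighbourhood of a set of vertices. -/
def nbhd {α : Type*} (G : SimpleGraph α) (A : Set α) : Set α :=
  {v | v ∉ A ∧ ∃ a ∈ A, G.Adj a v}

/-- 2-neighbourhood of a set of vertices. -/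
def nbhd2 {α : Type*} (G : SimpleGraph α) (A : Set α) : Set α :=
  nbhd G (nbhd G A) \ A

/-- `Sig σ i` = `Σ(i)`, the set of the first `i` vertices in the Prim ranking. -/
def Sig {nb nw : ℕ} (σ : ℕ → V nb nw) (i : ℕ) : Set (V nb nw) := σ '' Set.Iio i

def SigB {nb nw : ℕ} (σ : ℕ → V nb nw) (i : ℕ) : Set (V nb nw) := Sig σ i ∩ blacks nb nw

def SigW {nb nw : ℕ} (σ : ℕ → V nb nw) (i : ℕ) : Set (V nb nw) := Sig σ i ∩ whites nb nw

/-- `tb σ k` = `τ^b_k`, the (1-based) Prim rank of the `k`-th black vertex. -/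
noncomputable def tb {nb nw : ℕ} (σ : ℕ → V nb nw) (k : ℕ) : ℕ :=
  sInf {i | (SigB σ i).ncard = k}

/-- The vertex of (1-based) Prim rank `i`. -/
def vat {nb nw : ℕ} (σ : ℕ → V nb nw) (i : ℕ) : V nb nw := σ (i - 1)

/-- `σ^b(k) = σ(τ^b_k)`, the `k`-th black vertex in Prim order. -/
noncomputable def sigb {nb nw : ℕ} (σ : ℕ → V nb nw) (k : ℕ) : V nb nw := vat σ (tb σ k)

/-- 0-based Prim rank of a vertex. -/
noncomputable def rk0 {nb nw : ℕ} (σ : ℕ → V nb nw) (v : V nb nw) : ℕ := sInf {i | σ i = v}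

/-- A lead vertex: the vertex of lowest Prim rank in its connected component of `G`. -/
def isLead {nb nw : ℕ} (G : SimpleGraph (V nb nw)) (σ : ℕ → V nb nw) (v : V nb nw) : Prop :=
  ∀ u, G.Reachable v u → rk0 σ v ≤ rk0 σ u

/-- A root vertex: a black vertex of lowest Prim rank among the black vertices of
its connected component of `G`. -/
def isRoot {nb nw : ℕ} (G : SimpleGraph (V nb nw)) (σ : ℕ → V nb nw) (v : V nb nw) : Prop :=
  v ∈ blacks nb nw ∧ ∀ u ∈ blacks nb nw, G.Reachable v u → rk0 σ v ≤ rk0 σ u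

/-- `𝒥^w_k`: the white lead vertices among `Σ^w(τ^b_k)`. -/
def Jw {nb nw : ℕ} (G : SimpleGraph (V nb nw)) (σ : ℕ → V nb nw) (k : ℕ) : Set (V nb nw) :=
  {v | v ∈ SigW σ (tb σ k) ∧ isLead G σ v}

/-- `ℐ^b_k`: the root vertices among `Σ^b(τ^b_k)`. -/
def Ib {nb nw : ℕ} (G : SimpleGraph (V nb nw)) (σ : ℕ → V nb nw) (k : ℕ) : Set (V nb nw) :=
  {v | v ∈ SigB σ (tb σ k) ∧ isRoot G σ v}

noncomputable def Jwc {nb nw : ℕ} (G : SimpleGraph (V nb nw)) (σ : ℕ → V nb nw) (k : ℕ) : ℕ :=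
  (Jw G σ k).ncard

noncomputable def Ibc {nb nw : ℕ} (G : SimpleGraph (V nb nw)) (σ : ℕ → V nb nw) (k : ℕ) : ℕ :=
  (Ib G σ k).ncard

/-- `𝒦^w_k`: the pool of white vertices available for discovery at step `k`. -/
noncomputable def Kw {nb nw : ℕ} (G : SimpleGraph (V nb nw)) (σ : ℕ → V nb nw) :
    ℕ → Set (V nb nw)
  | 0 => ∅
  | 1 => whites nb nw \ SigW σ (tb σ 1)
  | (k+2) => Kw G σ (k+1) \ ((nbhd G {sigb σ (k+1)} ∩ Kw G σ (k+1)) ∪ SigW σ (tb σ (k+2)))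

/-- `𝒪^w_k = N(σ^b(k)) ∩ 𝒦^w_k`. -/
noncomputable def Ow {nb nw : ℕ} (G : SimpleGraph (V nb nw)) (σ : ℕ → V nb nw) (k : ℕ) :
    Set (V nb nw) :=
  nbhd G {sigb σ k} ∩ Kw G σ k

/-- Auxiliary recursion: `(ObAux k).1 = ∪_{j ∈ [k]} 𝒪^b_j` and `(ObAux k).2 = 𝒪^b_k`. -/
noncomputable def ObAux {nb nw : ℕ} (G : SimpleGraph (V nb nw)) (σ : ℕ → V nb nw) :
    ℕ → Set (V nb nw) × Set (V nb nw)
  | 0 => (∅, ∅)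
  | (k+1) =>
    let c := (ObAux G σ k).1
    let o := nbhd2 G {sigb σ (k+1)} ∩ (blacks nb nw \ (c ∪ SigB σ (tb σ (k+1))))
    (c ∪ o, o)

/-- `𝒪^b_k`, the 2-neighbourhood discovered at step `k`. -/
noncomputable def Ob {nb nw : ℕ} (G : SimpleGraph (V nb nw)) (σ : ℕ → V nb nw) (k : ℕ) :
    Set (V nb nw) :=
  (ObAux G σ k).2

/-- `𝒦^b_k = V^b ∖ (∪_{j ≤ k-1} 𝒪^b_j ∪ Σ^b(τ^b_k))`. -/
noncomputable def Kb {nb nw : ℕ} (G : SimpleGraph (V nb nw)) (σ : ℕ → V nb nw) (k : ℕ) :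
    Set (V nb nw) :=
  blacks nb nw \ ((ObAux G σ (k-1)).1 ∪ SigB σ (tb σ k))

noncomputable def Owc {nb nw : ℕ} (G : SimpleGraph (V nb nw)) (σ : ℕ → V nb nw) (k : ℕ) : ℕ :=
  (Ow G σ k).ncard

noncomputable def Obc {nb nw : ℕ} (G : SimpleGraph (V nb nw)) (σ : ℕ → V nb nw) (k : ℕ) : ℕ :=
  (Ob G σ k).ncard

noncomputable def Kwc {nb nw : ℕ} (G : SimpleGraph (V nb nw)) (σ : ℕ → V nb nw) (k : ℕ) : ℕ :=
  (Kw G σ k).ncard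

noncomputable def Kbc {nb nw : ℕ} (G : SimpleGraph (V nb nw)) (σ : ℕ → V nb nw) (k : ℕ) : ℕ :=
  (Kb G σ k).ncard

/-- `S^w_k = Σ_{j ∈ [k]} O^w_j`. -/
noncomputable def Swk {nb nw : ℕ} (G : SimpleGraph (V nb nw)) (σ : ℕ → V nb nw) (k : ℕ) : ℕ :=
  ∑ j ∈ Finset.range k, Owc G σ (j+1)

/-- `S^b_k = Σ_{j ∈ [k]} O^b_j`. -/
noncomputable def Sbk {nb nw : ℕ} (G : SimpleGraph (V nb nw)) (σ : ℕ → V nb nw) (k : ℕ) : ℕ :=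
  ∑ j ∈ Finset.range k, Obc G σ (j+1)

/-- `R(k) = |Σ^w(τ^b_k)| − J^w(k)`. -/
noncomputable def Rfn {nb nw : ℕ} (G : SimpleGraph (V nb nw)) (σ : ℕ → V nb nw) (k : ℕ) : ℤ :=
  ((SigW σ (tb σ k)).ncard : ℤ) - Jwc G σ k

/-- `Δ_k = Σ_{1 ≤ i ≤ O^w_k} |𝒩_i| = |N(𝒪^w_k) ∩ 𝒦^b_k|`. -/
noncomputable def Delta {nb nw : ℕ} (G : SimpleGraph (V nb nw)) (σ : ℕ → V nb nw) (k : ℕ) : ℕ :=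
  (nbhd G (Ow G σ k) ∩ Kb G σ k).ncard

/-- `𝒜^w_k = {σ(i) : i > τ^b_k, σ(i) ∈ ∪_{j ∈ [k−1]} 𝒪^w_j}`. -/
noncomputable def Aw {nb nw : ℕ} (G : SimpleGraph (V nb nw)) (σ : ℕ → V nb nw) (k : ℕ) :
    Set (V nb nw) :=
  (⋃ j ∈ Finset.range (k-1), Ow G σ (j+1)) \ Sig σ (tb σ k)

/-- `𝒜^b_k = (∪_{j ∈ [k]} 𝒪^b_j) ∖ Σ^b(τ^b_k)`. -/
noncomputable def Ab {nb nw : ℕ} (G : SimpleGraph (V nb nw)) (σ : ℕ → V nb nw) (k : ℕ) :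
    Set (V nb nw) :=
  (⋃ j ∈ Finset.range k, Ob G σ (j+1)) \ SigB σ (tb σ k)

/-- The interval `⟦i,j⟧_π` of vertices of π-rank between `i` and `j`. -/
def geoInterval {α : Type*} {m : ℕ} (π : Fin m ≃ α) (i j : Fin m) : Set α :=
  {v | i ≤ π.symm v ∧ π.symm v ≤ j}

/-- `π` is a graph exploration order (GEO) for `G`. -/
def IsGEO {α : Type*} {m : ℕ} (G : SimpleGraph α) (π : Fin m ≃ α) : Prop :=
  ∀ i j : Fin m, i ≤ j → G.Reachable (π i) (π j) →
    ∃ i', i' ≤ i ∧ (G.induce (geoInterval π i' j)).Connected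

/-- A `π`-good path from `u` to `v`: a path along which the π-ranks strictly increase. -/
def IsGoodPath {α : Type*} {m : ℕ} (G : SimpleGraph α) (π : Fin m ≃ α) (u v : α) : Prop :=
  ∃ (k : ℕ) (w : ℕ → α), w 0 = u ∧ w k = v ∧ (∀ i < k, G.Adj (w i) (w (i+1))) ∧
    StrictMonoOn (fun i => π.symm (w i)) (Set.Iic k)

/-- GEO for a 0-indexed enumeration `σ` of the `n` vertices. -/
def IsGEOSeq {α : Type*} (G : SimpleGraph α) (n : ℕ) (σ : ℕ → α) : Prop :=
  ∀ i j, i ≤ j → j < n → G.Reachable (σ i) (σ j) →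
    ∃ i' ≤ i, (G.induce (σ '' Set.Icc i' j)).Connected

/-- `pew W σ i` = `U_{e_i}`, the weight of the `i`-th Prim edge: the minimal weight
over the cut between the first `i` vertices and the rest. -/
noncomputable def pew {nb nw : ℕ} (W : Fin nb → Fin nw → ℝ) (σ : ℕ → V nb nw) (i : ℕ) : ℝ :=
  sInf {x | ∃ a b, a < i ∧ i ≤ b ∧ b < nb + nw ∧ x = wt W (σ a) (σ b)}

/-- The sequence `J_j` of Prim ranks at which new components start. -/
noncomputable def Jseq {nb nw : ℕ} (W : Fin nb → Fin nw → ℝ) (σ : ℕ → V nb nw) (p : ℝ) :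
    ℕ → ℕ
  | 0 => 0
  | (j+1) => sInf ({i | Jseq W σ p j < i ∧ i < nb + nw ∧ p < pew W σ i} ∪ {nb + nw})

/-- `m = inf{j ≥ 1 : J_j = n}`, the number of connected components. -/
noncomputable def mComp {nb nw : ℕ} (W : Fin nb → Fin nw → ℝ) (σ : ℕ → V nb nw) (p : ℝ) : ℕ :=
  sInf {j | 1 ≤ j ∧ Jseq W σ p j = nb + nw}

/-- The binomial probability mass function. -/
noncomputable def binomPMF (m : ℕ) (p : ℝ) (j : ℕ) : ℝ :=
  (m.choose j : ℝ) * p ^ j * (1 - p) ^ (m - j)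

/-- The pmf of the distribution `𝒟(m, k, p)`: the law of `X_1 + ⋯ + X_k` where
`X_1 ~ Bin(m,p)` and, given `X_1,…,X_i`, `X_{i+1} ~ Bin(m − Σ_{j≤i} X_j, p)`. -/
noncomputable def Dpmf : ℕ → ℕ → ℝ → ℕ → ℝ
  | _, 0, _, j => if j = 0 then 1 else 0
  | m, (k+1), p, j => ∑ i ∈ Finset.range (j+1), binomPMF m p i * Dpmf (m - i) k p (j - i)

end PrimBip

open PrimBip

private lemma reach_in_induce {α : Type*} (G : SimpleGraph α) (s : Set α) :
    ∀ (k : ℕ) (w : ℕ → α), (∀ i < k, G.Adj (w i) (w (i+1))) →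
      ∀ (hmem : ∀ i ≤ k, w i ∈ s),
      (G.induce s).Reachable ⟨w 0, hmem 0 (Nat.zero_le _)⟩ ⟨w k, hmem k le_rfl⟩ := by
  intro k
  induction k with
  | zero => intro w _ hmem; exact SimpleGraph.Reachable.refl _
  | succ n ih =>
    intro w hadj hmem
    have h1 := ih w (fun i hi => hadj i (Nat.lt_succ_of_lt hi))
      (fun i hi => hmem i (hi.trans (Nat.le_succ n)))
    have h2 : (G.induce s).Adj ⟨w n, hmem n (Nat.le_succ n)⟩ ⟨w (n+1), hmem (n+1) le_rfl⟩ :=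
      hadj n (Nat.lt_succ_self n)
    exact h1.trans h2.reachable

/-- Lemma `lem: prim`: for a GEO `π` and a connected component `C` of `G`
with lowest rank `kmin` and highest rank `kmax`, (i) the vertex set of `C` is the rank
interval `⟦kmin, kmax⟧_π`, and (ii) every vertex of `C` is reachable from `π kmin` by a
`π`-good path. Conversely, any ordering satisfying (i) and (ii) for every connected
component is a GEO. -/
theorem statement_2 {α : Type*} [Fintype α] (G : SimpleGraph α) {m : ℕ} (π : Fin m ≃ α)
    (c : G.ConnectedComponent) (kmin kmax : Fin m)
    (hmin : IsLeast {k : Fin m | π k ∈ c.supp} kmin)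
    (hmax : IsGreatest {k : Fin m | π k ∈ c.supp} kmax) :
    (IsGEO G π →
      (c.supp = geoInterval π kmin kmax ∧ ∀ v ∈ c.supp, IsGoodPath G π (π kmin) v)) ∧
    ((∀ (c' : G.ConnectedComponent) (kmin' kmax' : Fin m),
        IsLeast {k : Fin m | π k ∈ c'.supp} kmin' →
        IsGreatest {k : Fin m | π k ∈ c'.supp} kmax' →
        (c'.supp = geoInterval π kmin' kmax' ∧
          ∀ v ∈ c'.supp, IsGoodPath G π (π kmin') v)) →
      IsGEO G π) := by
  have hreach_supp : ∀ (c0 : G.ConnectedComponent) (a b : α),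
      a ∈ c0.supp → b ∈ c0.supp → G.Reachable a b := by
    intro c0 a b ha hb
    rw [SimpleGraph.ConnectedComponent.mem_supp_iff] at ha hb
    exact SimpleGraph.ConnectedComponent.exact (ha.trans hb.symm)
  constructor
  · intro hGEO
    have hkk : kmin ≤ kmax := hmin.2 hmax.1
    have hsub : c.supp ⊆ geoInterval π kmin kmax := by
      intro v hv
      have h1 : π.symm v ∈ {k : Fin m | π k ∈ c.supp} := by
        simp only [Set.mem_setOf_eq, Equiv.apply_symm_apply]; exact hv
      exact ⟨hmin.2 h1, hmax.2 h1⟩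
    have hreach0 : G.Reachable (π kmin) (π kmax) := hreach_supp c _ _ hmin.1 hmax.1
    have hsup : geoInterval π kmin kmax ⊆ c.supp := by
      intro v hv
      obtain ⟨i', hi', hconn⟩ := hGEO kmin kmax hkk hreach0
      have hvmem : v ∈ geoInterval π i' kmax := ⟨hi'.trans hv.1, hv.2⟩
      have hkmem : π kmin ∈ geoInterval π i' kmax := by
        refine ⟨?_, ?_⟩ <;> rw [Equiv.symm_apply_apply]
        · exact hi'
        · exact hkk
      have hr := hconn.preconnected ⟨π kmin, hkmem⟩ ⟨v, hvmem⟩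
      have hr2 : G.Reachable (π kmin) v :=
        hr.map (SimpleGraph.Embedding.induce (geoInterval π i' kmax)).toHom
      rw [SimpleGraph.ConnectedComponent.mem_supp_iff,
        ← SimpleGraph.ConnectedComponent.sound hr2]
      exact (SimpleGraph.ConnectedComponent.mem_supp_iff c (π kmin)).mp hmin.1
    have key : ∀ n : ℕ, ∀ v ∈ c.supp, (π.symm v : ℕ) < n → IsGoodPath G π (π kmin) v := by
      intro n
      induction n with
      | zero => intro v _ h; exact absurd h (Nat.not_lt_zero _)
      | succ n ih =>
        intro v hv hvn
        by_cases hveq : v = π kmin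
        · subst hveq
          exact ⟨0, fun _ => π kmin, rfl, rfl, fun i hi => absurd hi (Nat.not_lt_zero _),
            fun a ha b hb hab => absurd (lt_of_lt_of_le hab hb) (Nat.not_lt_zero a)⟩
        · have hlt : kmin < π.symm v := by
            refine lt_of_le_of_ne (hsub hv).1 ?_
            intro heq
            exact hveq (by rw [heq, Equiv.apply_symm_apply])
          obtain ⟨i', hi', hconn⟩ := hGEO kmin (π.symm v) hlt.le
            (by rw [Equiv.apply_symm_apply]; exact hreach_supp c _ _ hmin.1 hv)
          have hvS : v ∈ geoInterval π i' (π.symm v) := ⟨hi'.trans hlt.le, le_rfl⟩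
          have hkS : π kmin ∈ geoInterval π i' (π.symm v) := by
            refine ⟨?_, ?_⟩ <;> rw [Equiv.symm_apply_apply]
            · exact hi'
            · exact hlt.le
          obtain ⟨p⟩ := hconn.preconnected ⟨v, hvS⟩ ⟨π kmin, hkS⟩
          have hne : (⟨v, hvS⟩ : geoInterval π i' (π.symm v)) ≠ ⟨π kmin, hkS⟩ :=
            fun h => hveq (congrArg Subtype.val h)
          have hadj := p.adj_snd (SimpleGraph.Walk.not_nil_of_ne hne)
          have huadj : G.Adj v (p.getVert 1 : α) := hadj
          have huS : (p.getVert 1 : α) ∈ geoInterval π i' (π.symm v) := (p.getVert 1).2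
          have hult : π.symm (p.getVert 1 : α) < π.symm v :=
            lt_of_le_of_ne huS.2 (fun h => huadj.ne (π.symm.injective h).symm)
          have husupp : (p.getVert 1 : α) ∈ c.supp := by
            rw [SimpleGraph.ConnectedComponent.mem_supp_iff,
              SimpleGraph.ConnectedComponent.sound huadj.symm.reachable]
            exact (SimpleGraph.ConnectedComponent.mem_supp_iff c v).mp hv
          have hultn : (π.symm (p.getVert 1 : α) : ℕ) < (π.symm v : ℕ) := hult
          obtain ⟨k, w, hw0, hwk, hwadj, hwmono⟩ :=
            ih (p.getVert 1 : α) husupp (by omega)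
          refine ⟨k+1, fun i => if i ≤ k then w i else v, ?_, ?_, ?_, ?_⟩
          · simpa using hw0
          · simp
          · intro i hi
            rcases Nat.lt_succ_iff_lt_or_eq.mp hi with h | h
            · simp only [if_pos h.le, if_pos (Nat.succ_le_of_lt h)]
              exact hwadj i h
            · subst h
              simp only [if_pos le_rfl, if_neg (Nat.not_succ_le_self i)]
              rw [hwk]; exact huadj.symm
          · intro a ha b hb hab
            simp only [Set.mem_Iic] at ha hb
            by_cases hbk : b ≤ k
            · have hak : a ≤ k := hab.le.trans hbk
              simpa only [if_pos hak, if_pos hbk] using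
                hwmono (Set.mem_Iic.mpr hak) (Set.mem_Iic.mpr hbk) hab
            · have hak : a ≤ k := by omega
              show π.symm (if a ≤ k then w a else v) < π.symm (if b ≤ k then w b else v)
              rw [if_pos hak, if_neg hbk]
              have hle : π.symm (w a) ≤ π.symm (w k) := by
                rcases lt_or_eq_of_le hak with h | h
                · exact (hwmono (Set.mem_Iic.mpr hak) Set.self_mem_Iic h).le
                · rw [h]
              calc π.symm (w a) ≤ π.symm (w k) := hle
                _ < π.symm v := by rw [hwk]; exact hult
    refine ⟨Set.Subset.antisymm hsub hsup, fun v hv => key m v hv (π.symm v).isLt⟩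
  · intro H i j hij hreach
    have hiS : i ∈ {k : Fin m | π k ∈ (G.connectedComponentMk (π i)).supp} :=
      (SimpleGraph.ConnectedComponent.mem_supp_iff _ _).mpr rfl
    have hjS : j ∈ {k : Fin m | π k ∈ (G.connectedComponentMk (π i)).supp} :=
      (SimpleGraph.ConnectedComponent.mem_supp_iff _ _).mpr
        (SimpleGraph.ConnectedComponent.sound hreach).symm
    have hne : ({k : Fin m | π k ∈ (G.connectedComponentMk (π i)).supp}).Nonempty := ⟨i, hiS⟩
    obtain ⟨kmin', hk1, hk2⟩ := Set.exists_min_image _ id (Set.toFinite _) hne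
    obtain ⟨kmax', hg1, hg2⟩ := Set.exists_max_image _ id (Set.toFinite _) hne
    obtain ⟨hsupp_eq, hgood⟩ := H (G.connectedComponentMk (π i)) kmin' kmax'
      ⟨hk1, fun b hb => hk2 b hb⟩ ⟨hg1, fun b hb => hg2 b hb⟩
    have hki : kmin' ≤ i := hk2 i hiS
    have hkj : kmin' ≤ j := hki.trans hij
    refine ⟨kmin', hki, ?_⟩
    have hbaseS : π kmin' ∈ geoInterval π kmin' j := by
      refine ⟨?_, ?_⟩ <;> rw [Equiv.symm_apply_apply]
      · exact hkj
    have hmain : ∀ x : geoInterval π kmin' j,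
        (G.induce (geoInterval π kmin' j)).Reachable ⟨π kmin', hbaseS⟩ x := by
      rintro ⟨v, hv⟩
      have hvsupp : v ∈ (G.connectedComponentMk (π i)).supp := by
        rw [hsupp_eq]
        exact ⟨hv.1, hv.2.trans (hg2 j hjS)⟩
      obtain ⟨k, w, hw0, hwk, hwadj, hwmono⟩ := hgood v hvsupp
      have hmem : ∀ t ≤ k, w t ∈ geoInterval π kmin' j := by
        intro t ht
        have h1 : π.symm (w 0) ≤ π.symm (w t) := by
          rcases Nat.eq_zero_or_pos t with h | h
          · rw [h]
          · exact (hwmono (Set.mem_Iic.mpr (Nat.zero_le k)) (Set.mem_Iic.mpr ht) h).le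
        have h2 : π.symm (w t) ≤ π.symm (w k) := by
          rcases lt_or_eq_of_le ht with h | h
          · exact (hwmono (Set.mem_Iic.mpr ht) Set.self_mem_Iic h).le
          · rw [h]
        rw [hw0, Equiv.symm_apply_apply] at h1
        rw [hwk] at h2
        exact ⟨h1, h2.trans hv.2⟩
      have hr := reach_in_induce G _ k w hwadj hmem
      have e0 : (⟨w 0, hmem 0 (Nat.zero_le _)⟩ : geoInterval π kmin' j) = ⟨π kmin', hbaseS⟩ :=
        Subtype.ext hw0
      have ek : (⟨w k, hmem k le_rfl⟩ : geoInterval π kmin' j) = ⟨v, hv⟩ :=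
        Subtype.ext hwk
      rw [e0, ek] at hr
      exact hr
    haveI : Nonempty (geoInterval π kmin' j) := ⟨⟨π kmin', hbaseS⟩⟩
    exact ⟨fun a b => (hmain a).symm.trans (hmain b)⟩
end

section
/- Let p ∈ (0,1). Define J_0 = 0, and for j ≥ 1, J_j = (inf{i > J_{j−1} : U_{e_i} > p}) ∧ n, and m = inf{j ≥ 1 : J_j = n}. Then almost surely the vertex sets of the connected components of G(n_b,n_w,p) are exactly the sets C_j(p) = {σ(i) : J_{j−1}+1 ≤ i ≤ J_j} for 1 ≤ j ≤ m, and the Prim sequence σ : [n] → V_n is a GEO for G(n_b,n_w,p). -/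
open MeasureTheory ProbabilityTheory Filter

open PrimBip

section Aux

open SimpleGraph

variable {nb nw : ℕ} {W : Fin nb → Fin nw → ℝ} {σ : ℕ → V nb nw} {p : ℝ}

lemma wt_nonneg (hW : GoodWeights W) (u v : V nb nw) : 0 ≤ wt W u v := by
  obtain ⟨h1, -⟩ := hW
  cases u <;> cases v
  · norm_num [wt]
  · exact le_of_lt (h1 _ _).1
  · exact le_of_lt (h1 _ _).1
  · norm_num [wt]

lemma percGraph_adj {u v : V nb nw} :
    (percGraph W p).Adj u v ↔ u ≠ v ∧ wt W u v ≤ p := Iff.rfl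

lemma pew_le (hW : GoodWeights W) {k a b : ℕ}
    (ha : a < k) (hb1 : k ≤ b) (hb2 : b < nb + nw) :
    pew W σ k ≤ wt W (σ a) (σ b) := by
  apply csInf_le
  · refine ⟨0, ?_⟩
    rintro x ⟨a', b', _, _, _, rfl⟩
    exact wt_nonneg hW _ _
  · exact ⟨a, b, ha, hb1, hb2, rfl⟩

lemma pew_eq (hW : GoodWeights W) (hσ : IsPrimSeq W σ) {k : ℕ}
    (hk0 : 0 < k) (hkn : k < nb + nw) :
    ∃ j, j < k ∧ pew W σ k = wt W (σ j) (σ k) := by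
  obtain ⟨j, hj, hmin⟩ := hσ.2.2 k hk0 hkn
  refine ⟨j, hj, le_antisymm (pew_le hW hj le_rfl hkn) ?_⟩
  refine le_csInf ⟨wt W (σ j) (σ k), ⟨j, k, hj, le_rfl, hkn, rfl⟩⟩ ?_
  rintro x ⟨a, b, ha, hb1, hb2, rfl⟩
  exact hmin a b ha hb1 hb2

/-- If all edges across the cut at `t` have weight `> p`, reachability cannot
leave the first `t` vertices. -/
lemma cut_closed (hW : GoodWeights W) (hσ : IsPrimSeq W σ) {t : ℕ}
    (ht : p < pew W σ t) {u v : V nb nw}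
    (h : (percGraph W p).Reachable u v) (hu : u ∈ σ '' Set.Iio t) :
    v ∈ σ '' Set.Iio t := by
  have hsurj : ∀ x : V nb nw, ∃ b, b < nb + nw ∧ σ b = x := by
    intro x
    have hx : x ∈ σ '' Set.Iio (nb + nw) := hσ.1 ▸ Set.mem_univ x
    obtain ⟨b, hb, rfl⟩ := hx
    exact ⟨b, hb, rfl⟩
  suffices H : ∀ (u v : V nb nw) (_ : (percGraph W p).Walk u v),
      u ∈ σ '' Set.Iio t → v ∈ σ '' Set.Iio t by
    obtain ⟨w⟩ := h; exact H u v w hu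
  intro u v w
  induction w with
  | nil => exact id
  | @cons u' x' v' hadj q ih =>
    intro hu'
    apply ih
    obtain ⟨a, ha, rfl⟩ := hu'
    obtain ⟨b, hbn, rfl⟩ := hsurj x'
    refine ⟨b, ?_, rfl⟩
    by_contra hb
    rw [Set.mem_Iio, not_lt] at hb
    have hle : pew W σ t ≤ wt W (σ a) (σ b) := pew_le hW ha hb hbn
    have hwp : wt W (σ a) (σ b) ≤ p := hadj.2
    linarith

/-- If there is no "break" strictly between `s` and `j`, and `s` itself is
`0` or a break, then the Prim vertices `σ s, …, σ j` induce a connected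
subgraph of the percolation graph. -/
lemma geo_conn (hW : GoodWeights W) (hσ : IsPrimSeq W σ) {s j : ℕ}
    (hsn : s < nb + nw) (hjn : j < nb + nw) (hsj : s ≤ j)
    (hs : s = 0 ∨ p < pew W σ s)
    (hno : ∀ t, s < t → t ≤ j → pew W σ t ≤ p) :
    ((percGraph W p).induce (σ '' Set.Icc s j)).Connected := by
  set T := σ '' Set.Icc s j with hT
  have hmem : ∀ k, s ≤ k → k ≤ j → σ k ∈ T := fun k h1 h2 => ⟨k, ⟨h1, h2⟩, rfl⟩
  have key : ∀ k (h1 : s ≤ k) (h2 : k ≤ j),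
      ((percGraph W p).induce T).Reachable ⟨σ s, hmem s le_rfl hsj⟩ ⟨σ k, hmem k h1 h2⟩ := by
    intro k
    induction k using Nat.strong_induction_on with
    | _ k ih =>
      intro h1 h2
      rcases eq_or_lt_of_le h1 with rfl | hlt
      · exact Reachable.refl _
      · have hk0 : 0 < k := lt_of_le_of_lt (Nat.zero_le s) hlt
        have hkn : k < nb + nw := lt_of_le_of_lt h2 hjn
        obtain ⟨jk, hjk, hpe⟩ := pew_eq hW hσ hk0 hkn
        have hkp : pew W σ k ≤ p := hno k hlt h2
        have hjks : s ≤ jk := by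
          by_contra hc
          push_neg at hc
          rcases hs with rfl | hbrk
          · omega
          · have h1' : pew W σ s ≤ wt W (σ jk) (σ k) := pew_le hW hc (le_of_lt hlt) hkn
            rw [← hpe] at h1'
            linarith
        have hadj : (percGraph W p).Adj (σ jk) (σ k) := by
          refine ⟨fun he => ?_, by rw [← hpe]; exact hkp⟩
          have := hσ.2.1 (show jk ∈ Set.Iio (nb + nw) from lt_trans hjk hkn)
            (show k ∈ Set.Iio (nb + nw) from hkn) he
          omega
        have hadj' : ((percGraph W p).induce T).Adj
            ⟨σ jk, hmem jk hjks (le_of_lt (lt_of_lt_of_le hjk h2))⟩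
            ⟨σ k, hmem k h1 h2⟩ := hadj
        exact (ih jk hjk hjks (le_trans (le_of_lt hjk) h2)).trans hadj'.reachable
  haveI hne : Nonempty T := ⟨⟨σ s, hmem s le_rfl hsj⟩⟩
  refine ⟨?_⟩
  rintro ⟨x, hx⟩ ⟨y, hy⟩
  obtain ⟨kx, hkx, rfl⟩ := hx
  obtain ⟨ky, hky, rfl⟩ := hy
  exact (key kx hkx.1 hkx.2).symm.trans (key ky hky.1 hky.2)

/-- Reachability in an induced subgraph gives reachability in the ambient graph. -/
lemma reach_of_induce {α : Type*} {G : SimpleGraph α} {T : Set α} {x y : T}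
    (h : (G.induce T).Reachable x y) : G.Reachable x.1 y.1 :=
  h.map (⟨Subtype.val, fun hadj => hadj⟩ : G.induce T →g G)

end Aux


/-- Proposition `prop: prim`: almost surely (here: whenever the edge
weights are distinct, lie in `(0,1)`, and `σ` is the Prim sequence), the vertex sets of
the connected components of `G(n_b,n_w,p)` are exactly the Prim-rank intervals
`𝒞_j(p) = {σ(i) : J_{j−1}+1 ≤ i ≤ J_j}`, `1 ≤ j ≤ m`, and the Prim sequence is a GEO
for `G(n_b,n_w,p)`. -/
theorem statement_3 {nb nw : ℕ} (hnb : 0 < nb) (hnw : 0 < nw)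
    (W : Fin nb → Fin nw → ℝ) (σ : ℕ → V nb nw)
    (hW : GoodWeights W) (hσ : IsPrimSeq W σ)
    (p : ℝ) (hp : p ∈ Set.Ioo (0:ℝ) 1) :
    (∀ S : Set (V nb nw),
      (∃ c : (percGraph W p).ConnectedComponent, S = c.supp) ↔
        (∃ j, 1 ≤ j ∧ j ≤ mComp W σ p ∧
          S = σ '' Set.Ico (Jseq W σ p (j-1)) (Jseq W σ p j))) ∧
    IsGEOSeq (percGraph W p) (nb + nw) σ := by
  have hn : 0 < nb + nw := by omega
  have hsurj : ∀ v : V nb nw, ∃ b, b < nb + nw ∧ σ b = v := by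
    intro v
    have hv : v ∈ σ '' Set.Iio (nb + nw) := hσ.1 ▸ Set.mem_univ v
    obtain ⟨b, hb, rfl⟩ := hv
    exact ⟨b, hb, rfl⟩
  have hinj := hσ.2.1
  have hJ0 : Jseq W σ p 0 = 0 := rfl
  -- basic facts about Jseq
  have hJle : ∀ j, Jseq W σ p j ≤ nb + nw := by
    intro j
    cases j with
    | zero => exact Nat.zero_le _
    | succ j =>
      exact Nat.sInf_le (Set.mem_union_right _ rfl)
  have hJmem : ∀ j, Jseq W σ p (j+1) ∈
      ({i | Jseq W σ p j < i ∧ i < nb + nw ∧ p < pew W σ i} ∪ {nb + nw} : Set ℕ) :=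
    fun j => Nat.sInf_mem ⟨nb + nw, Set.mem_union_right _ rfl⟩
  have hJlt : ∀ j, Jseq W σ p j < nb + nw → Jseq W σ p j < Jseq W σ p (j+1) := by
    intro j hj
    rcases hJmem j with h | h
    · exact h.1
    · rw [Set.mem_singleton_iff] at h; omega
  have hJstab : ∀ j, Jseq W σ p j = nb + nw → Jseq W σ p (j+1) = nb + nw := by
    intro j hj
    rcases hJmem j with h | h
    · obtain ⟨h1, h2, -⟩ := h; omega
    · exact h
  have hJn : Jseq W σ p (nb + nw) = nb + nw := by
    have key : ∀ j, Jseq W σ p j = nb + nw ∨ j ≤ Jseq W σ p j := by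
      intro j
      induction j with
      | zero => exact Or.inr (Nat.zero_le _)
      | succ j ih =>
        rcases ih with h | h
        · exact Or.inl (hJstab j h)
        · rcases eq_or_lt_of_le (hJle j) with he | hlt
          · exact Or.inl (hJstab j he)
          · exact Or.inr (by have := hJlt j hlt; omega)
    rcases key (nb + nw) with h | h
    · exact h
    · exact le_antisymm (hJle _) h
  -- facts about mComp
  have hmmem : 1 ≤ mComp W σ p ∧ Jseq W σ p (mComp W σ p) = nb + nw :=
    Nat.sInf_mem (⟨nb + nw, by omega, hJn⟩ :
      {j | 1 ≤ j ∧ Jseq W σ p j = nb + nw}.Nonempty)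
  have hm1 : 1 ≤ mComp W σ p := hmmem.1
  have hJm : Jseq W σ p (mComp W σ p) = nb + nw := hmmem.2
  have hJlt_n : ∀ j, j < mComp W σ p → Jseq W σ p j < nb + nw := by
    intro j hj
    cases j with
    | zero => rw [hJ0]; exact hn
    | succ j' =>
      rcases lt_or_eq_of_le (hJle (j'+1)) with h | h
      · exact h
      · exact absurd (show mComp W σ p ≤ j' + 1 from Nat.sInf_le
          (show j'+1 ∈ {j | 1 ≤ j ∧ Jseq W σ p j = nb + nw} from ⟨by omega, h⟩)) (by omega)
  -- break facts
  have hbrk : ∀ j, 1 ≤ j → Jseq W σ p j < nb + nw → p < pew W σ (Jseq W σ p j) := by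
    intro j h1 h2
    obtain ⟨j', rfl⟩ : ∃ j', j = j' + 1 := ⟨j - 1, by omega⟩
    rcases hJmem j' with h | h
    · exact h.2.2
    · rw [Set.mem_singleton_iff] at h; omega
  have hnobrk : ∀ j i, Jseq W σ p j < i → i < Jseq W σ p (j+1) → pew W σ i ≤ p := by
    intro j i h1 h2
    by_contra hc
    push_neg at hc
    have hi_n : i < nb + nw := lt_of_lt_of_le h2 (hJle _)
    have hle2 : Jseq W σ p (j+1) ≤ i := Nat.sInf_le (Set.mem_union_left ({nb+nw} : Set ℕ)
      (show i ∈ {i | Jseq W σ p j < i ∧ i < nb + nw ∧ p < pew W σ i} from ⟨h1, hi_n, hc⟩))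
    omega
  -- locating an index inside an interval
  have hidx : ∀ b, b < nb + nw → ∃ j, 1 ≤ j ∧ j ≤ mComp W σ p ∧
      Jseq W σ p (j-1) ≤ b ∧ b < Jseq W σ p j := by
    intro b hb
    have hSm : mComp W σ p ∈ {j | b < Jseq W σ p j} := by
      show b < Jseq W σ p (mComp W σ p); rw [hJm]; exact hb
    have hmemS : sInf {j | b < Jseq W σ p j} ∈ {j | b < Jseq W σ p j} :=
      Nat.sInf_mem ⟨_, hSm⟩
    have hmemS' : b < Jseq W σ p (sInf {j | b < Jseq W σ p j}) := hmemS
    have hle : sInf {j | b < Jseq W σ p j} ≤ mComp W σ p := Nat.sInf_le hSm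
    have hpos : 1 ≤ sInf {j | b < Jseq W σ p j} := by
      rcases Nat.eq_zero_or_pos (sInf {j | b < Jseq W σ p j}) with h | h
      · rw [h, hJ0] at hmemS'; omega
      · exact h
    refine ⟨sInf {j | b < Jseq W σ p j}, hpos, hle, ?_, hmemS'⟩
    by_contra hc
    push_neg at hc
    have := Nat.sInf_le (show sInf {j | b < Jseq W σ p j} - 1 ∈ {j | b < Jseq W σ p j} from hc)
    omega
  -- s = 0 or s is a break, for s = Jseq (j-1)
  have hs_of : ∀ j, 1 ≤ j → Jseq W σ p (j-1) < nb + nw →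
      Jseq W σ p (j-1) = 0 ∨ p < pew W σ (Jseq W σ p (j-1)) := by
    intro j h1 hlt
    rcases Nat.eq_or_lt_of_le h1 with h | h
    · left; rw [show j - 1 = 0 from by omega]; exact hJ0
    · right; exact hbrk (j-1) (by omega) hlt
  have hno_of : ∀ j b, 1 ≤ j → b < Jseq W σ p j →
      ∀ t, Jseq W σ p (j-1) < t → t ≤ b → pew W σ t ≤ p := by
    intro j b h1 hb t ht1 ht2
    refine hnobrk (j-1) t ht1 ?_
    rw [show j - 1 + 1 = j from by omega]
    omega
  -- connectivity within an interval
  have hconn : ∀ j, 1 ≤ j → j ≤ mComp W σ p → ∀ b, Jseq W σ p (j-1) ≤ b →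
      b < Jseq W σ p j → (percGraph W p).Reachable (σ (Jseq W σ p (j-1))) (σ b) := by
    intro j h1 h2 b hb1 hb2
    have hsn : Jseq W σ p (j-1) < nb + nw := hJlt_n _ (by omega)
    have hbn : b < nb + nw := lt_of_lt_of_le hb2 (hJle j)
    have hc := geo_conn hW hσ hsn hbn hb1 (hs_of j h1 hsn) (hno_of j b h1 hb2)
    have hx : σ (Jseq W σ p (j-1)) ∈ σ '' Set.Icc (Jseq W σ p (j-1)) b :=
      ⟨_, ⟨le_rfl, hb1⟩, rfl⟩
    have hy : σ b ∈ σ '' Set.Icc (Jseq W σ p (j-1)) b := ⟨b, ⟨hb1, le_rfl⟩, rfl⟩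
    exact reach_of_induce (hc.preconnected ⟨_, hx⟩ ⟨_, hy⟩)
  -- the component of σ (Jseq (j-1)) is exactly the j-th interval
  have hsupp : ∀ j, 1 ≤ j → j ≤ mComp W σ p →
      ((percGraph W p).connectedComponentMk (σ (Jseq W σ p (j-1)))).supp =
        σ '' Set.Ico (Jseq W σ p (j-1)) (Jseq W σ p j) := by
    intro j h1 h2
    have hsn : Jseq W σ p (j-1) < nb + nw := hJlt_n _ (by omega)
    have hse : Jseq W σ p (j-1) < Jseq W σ p j := by
      have := hJlt (j-1) hsn
      rwa [show j - 1 + 1 = j from by omega] at this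
    ext v
    simp only [SimpleGraph.ConnectedComponent.mem_supp_iff]
    constructor
    · intro hv
      have hre : (percGraph W p).Reachable v (σ (Jseq W σ p (j-1))) :=
        SimpleGraph.ConnectedComponent.eq.mp hv
      obtain ⟨b, hbn, rfl⟩ := hsurj v
      refine ⟨b, ⟨?_, ?_⟩, rfl⟩
      · by_contra hc
        push_neg at hc
        have hs0 : 1 ≤ j - 1 := by
          by_contra h
          have hj1 : j - 1 = 0 := by omega
          rw [hj1, hJ0] at hc; omega
        have hb := hbrk (j-1) hs0 hsn
        obtain ⟨a, ha, heq⟩ := cut_closed hW hσ hb hre ⟨b, hc, rfl⟩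
        have ha' : a < Jseq W σ p (j-1) := ha
        have : a = Jseq W σ p (j-1) :=
          hinj (show a ∈ Set.Iio (nb+nw) from lt_trans ha' hsn) hsn heq
        omega
      · by_contra hc
        push_neg at hc
        have hen : Jseq W σ p j < nb + nw := lt_of_le_of_lt hc hbn
        have hb := hbrk j h1 hen
        obtain ⟨a, ha, heq⟩ := cut_closed hW hσ hb hre.symm ⟨_, hse, rfl⟩
        have ha' : a < Jseq W σ p j := ha
        have : a = b := hinj (show a ∈ Set.Iio (nb+nw) from lt_trans ha' hen) hbn heq
        omega
    · rintro ⟨b, ⟨hb1, hb2⟩, rfl⟩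
      exact SimpleGraph.ConnectedComponent.eq.mpr (hconn j h1 h2 b hb1 hb2).symm
  refine ⟨?_, ?_⟩
  · intro S
    constructor
    · rintro ⟨c, rfl⟩
      obtain ⟨v, rfl⟩ := c.exists_rep
      obtain ⟨b, hbn, rfl⟩ := hsurj v
      obtain ⟨j, h1, h2, hb1, hb2⟩ := hidx b hbn
      refine ⟨j, h1, h2, ?_⟩
      rw [← hsupp j h1 h2]
      exact congrArg SimpleGraph.ConnectedComponent.supp
        (SimpleGraph.ConnectedComponent.eq.mpr (hconn j h1 h2 b hb1 hb2).symm)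
    · rintro ⟨j, h1, h2, rfl⟩
      exact ⟨_, (hsupp j h1 h2).symm⟩
  · intro i j hij hjn hr
    obtain ⟨jc, h1, h2, hb1, hb2⟩ := hidx i (lt_of_le_of_lt hij hjn)
    have hje : j < Jseq W σ p jc := by
      by_contra hc
      push_neg at hc
      have hen : Jseq W σ p jc < nb + nw := lt_of_le_of_lt hc hjn
      have hb := hbrk jc h1 hen
      obtain ⟨a, ha, heq⟩ := cut_closed hW hσ hb hr ⟨i, hb2, rfl⟩
      have ha' : a < Jseq W σ p jc := ha
      have : a = j := hinj (show a ∈ Set.Iio (nb+nw) from lt_trans ha' hen) hjn heq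
      omega
    have hsn : Jseq W σ p (jc-1) < nb + nw := hJlt_n _ (by omega)
    exact ⟨Jseq W σ p (jc-1), hb1,
      geo_conn hW hσ hsn hjn (le_trans hb1 hij) (hs_of jc h1 hsn) (hno_of jc j h1 hje)⟩
end

section
/- Let G = (V,E) be a finite graph, π an ordering of V, and let π̂ be the ordering produced by the graph exploration in π-ordering: π̂(1) = π(1) and 𝒜̂_1 = N(π̂(1)); at each step 2 ≤ k ≤ |V|, if 𝒜̂_{k−1} ≠ ∅ then π̂(k) is the element of 𝒜̂_{k−1} of lowest π-rank, otherwise π̂(k) is the element of V∖{π̂(1),…,π̂(k−1)} of lowest π-rank; and 𝒜̂_k = N({π̂(1),…,π̂(k)}). If π is a GEO for G, then π̂ = π. -/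
open MeasureTheory ProbabilityTheory Filter

open PrimBip

lemma exists_adj_of_reachable' {V : Type*} {G : SimpleGraph V} {a c : V}
    (h : G.Reachable a c) (hne : a ≠ c) : ∃ b, G.Adj a b := by
  obtain ⟨w⟩ := h
  cases w with
  | nil => exact absurd rfl hne
  | cons h _ => exact ⟨_, h⟩


/-- Proposition `luka-preserver-graph-explo`: if `π` is a GEO for `G`,
then the ordering `π̂` produced by the graph exploration of `G` in `π`-ordering
(characterised below by its defining recursion) coincides with `π`. -/
theorem statement_4 {α : Type*} [Fintype α] (G : SimpleGraph α) {m : ℕ} (π : Fin m ≃ α)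
    (hGEO : IsGEO G π) (hatπ : Fin m → α)
    -- Step 1: `π̂(1) = π(1)`.
    (h1 : ∀ k : Fin m, (k : ℕ) = 0 → hatπ k = π k)
    -- Step k ≥ 2: with `visited = {π̂(1),…,π̂(k−1)}` and `𝒜̂_{k−1} = N(visited)`,
    -- `π̂(k)` is the lowest `π`-ranking element of `𝒜̂_{k−1}` if the latter is nonempty,
    -- and of the unvisited vertices otherwise.
    (hstep : ∀ k : Fin m, 0 < (k : ℕ) →
      ((nbhd G (hatπ '' {j : Fin m | j < k})).Nonempty →
        hatπ k ∈ nbhd G (hatπ '' {j : Fin m | j < k}) ∧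
          ∀ v ∈ nbhd G (hatπ '' {j : Fin m | j < k}), π.symm (hatπ k) ≤ π.symm v) ∧
      (¬ (nbhd G (hatπ '' {j : Fin m | j < k})).Nonempty →
        hatπ k ∉ hatπ '' {j : Fin m | j < k} ∧
          ∀ v, v ∉ hatπ '' {j : Fin m | j < k} → π.symm (hatπ k) ≤ π.symm v)) :
    hatπ = π := by
  have key : ∀ n : ℕ, ∀ k : Fin m, (k : ℕ) < n → hatπ k = π k := by
    intro n
    induction n with
    | zero => intro k hk; omega
    | succ n IHn =>
      intro k hk
      by_cases hk0 : (k : ℕ) = 0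
      · exact h1 k hk0
      have hkpos : 0 < (k : ℕ) := Nat.pos_of_ne_zero hk0
      have IH : ∀ j : Fin m, j < k → hatπ j = π j := by
        intro j hj
        exact IHn j (by omega)
      have himg : hatπ '' {j : Fin m | j < k} = π '' {j : Fin m | j < k} :=
        Set.image_congr IH
      have hmem : ∀ v : α, v ∈ π '' {j : Fin m | j < k} ↔ π.symm v < k := by
        intro v
        constructor
        · rintro ⟨j, hj, rfl⟩; simpa using hj
        · intro h; exact ⟨π.symm v, h, π.apply_symm_apply v⟩
      have hknotvis : π k ∉ π '' {j : Fin m | j < k} := by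
        rw [hmem]; simp
      by_cases hne : (nbhd G (hatπ '' {j : Fin m | j < k})).Nonempty
      · obtain ⟨hmemA, hmin⟩ := (hstep k hkpos).1 hne
        rw [himg] at hmemA hmin
        obtain ⟨hnotvis, a, havis, hadj⟩ := hmemA
        set b : Fin m := π.symm (hatπ k) with hbdef
        have hbk : k ≤ b := by
          by_contra hlt
          exact hnotvis ((hmem _).2 (not_le.mp hlt))
        have hb : hatπ k = π b := (π.apply_symm_apply _).symm
        obtain ⟨j, hjk, rfl⟩ := havis
        have hjk : j < k := hjk
        -- reachability from π j to π b
        have reach1 : G.Reachable (π j) (π b) := by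
          rw [← hb]; exact hadj.reachable
        obtain ⟨i', hi', hconn⟩ := hGEO j b (le_of_lt (lt_of_lt_of_le hjk hbk)) reach1
        have memk : π k ∈ geoInterval π i' b := by
          constructor <;> simp [geoInterval, le_trans hi' hjk.le, hbk]
        have memj : π j ∈ geoInterval π i' b := by
          constructor <;> simp [geoInterval, hi', le_of_lt (lt_of_lt_of_le hjk hbk)]
        have reach2 : G.Reachable (π k) (π j) :=
          (hconn.preconnected ⟨π k, memk⟩ ⟨π j, memj⟩).map
            (SimpleGraph.Embedding.induce _).toHom
        obtain ⟨i'', hi'', hconn2⟩ := hGEO j k hjk.le reach2.symm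
        have memk2 : π k ∈ geoInterval π i'' k := by
          constructor <;> simp [geoInterval, le_trans hi'' hjk.le]
        have memj2 : π j ∈ geoInterval π i'' k := by
          constructor <;> simp [geoInterval, hi'', hjk.le]
        have hnesub : (⟨π k, memk2⟩ : geoInterval π i'' k) ≠ ⟨π j, memj2⟩ := by
          intro h
          have h2 : π k = π j := congrArg Subtype.val h
          have := π.injective h2
          omega
        obtain ⟨u, hu⟩ := exists_adj_of_reachable'
          (hconn2.preconnected ⟨π k, memk2⟩ ⟨π j, memj2⟩) hnesub
        have huadj : G.Adj (π k) (u : α) := hu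
        have hurank : π.symm (u : α) < k := by
          rcases lt_or_eq_of_le u.2.2 with h | h
          · exact h
          · exfalso
            have h2 : (u : α) = π k := (Equiv.symm_apply_eq π).mp h
            exact huadj.ne h2.symm
        have hkA : π k ∈ nbhd G (π '' {j : Fin m | j < k}) :=
          ⟨hknotvis, u, (hmem _).2 hurank, huadj.symm⟩
        have hle : π.symm (hatπ k) ≤ k := by
          have := hmin _ hkA
          simpa using this
        have : b = k := le_antisymm hle hbk
        rw [hb, this]
      · obtain ⟨hnot, hmin⟩ := (hstep k hkpos).2 hne
        rw [himg] at hnot hmin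
        have hle : π.symm (hatπ k) ≤ k := by
          have := hmin _ hknotvis
          simpa using this
        have hge : k ≤ π.symm (hatπ k) := by
          by_contra hlt
          exact hnot ((hmem _).2 (not_le.mp hlt))
        have : π.symm (hatπ k) = k := le_antisymm hle hge
        rw [← π.apply_symm_apply (hatπ k), this]
  funext k
  exact key ((k : ℕ) + 1) k (Nat.lt_succ_self _)
end

section
/- Let p ∈ [0,1] and consider the 2-neighbourhood exploration of G(n_b,n_w,p) in Prim's order: σ^b(1) is the black vertex of lowest Prim rank and 𝒜^b_1 = N²(σ^b(1)); at step 2 ≤ k ≤ n_b, if 𝒜^b_{k−1} ≠ ∅ then σ^b(k) is the element of 𝒜^b_{k−1} of lowest Prim rank, otherwise σ^b(k) is the element of V^b_n∖{σ^b(1),…,σ^b(k−1)} of lowest Prim rank; and 𝒜^b_k = N²({σ^b(1),…,σ^b(k)}). For k ∈ [n_b] let τ^b_k = min{i : |Σ(i) ∩ V^b_n| = k} be the Prim rank of the k-th black vertex. Then σ^b(k) = σ(τ^b_k) for every k ∈ [n_b]. -/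
open MeasureTheory ProbabilityTheory Filter

open PrimBip

section Aux

variable {nb nw : ℕ} {W : Fin nb → Fin nw → ℝ} {σ : ℕ → V nb nw} {p : ℝ}

lemma not_black_of_white {v : V nb nw} (h : v ∈ whites nb nw) : v ∉ blacks nb nw := by
  obtain ⟨w, rfl⟩ := h
  rintro ⟨b, hb⟩
  exact Sum.inl_ne_inr hb

lemma adj_black_white (hp : p ≤ 1) {u v : V nb nw}
    (h : (percGraph W p).Adj u v) (hu : u ∈ blacks nb nw) : v ∈ whites nb nw := by
  obtain ⟨b, rfl⟩ := hu
  cases v with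
  | inl b' =>
    exfalso
    have h2 : wt W (Sum.inl b) (Sum.inl b') ≤ p := h.2
    have : wt W (Sum.inl b) (Sum.inl b') = 2 := rfl
    rw [this] at h2; linarith
  | inr w => exact ⟨w, rfl⟩

lemma adj_white_black (hp : p ≤ 1) {u v : V nb nw}
    (h : (percGraph W p).Adj u v) (hu : u ∈ whites nb nw) : v ∈ blacks nb nw := by
  obtain ⟨w, rfl⟩ := hu
  cases v with
  | inl b => exact ⟨b, rfl⟩
  | inr w' =>
    exfalso
    have h2 : wt W (Sum.inr w) (Sum.inr w') ≤ p := h.2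
    have : wt W (Sum.inr w) (Sum.inr w') = 2 := rfl
    rw [this] at h2; linarith

lemma rk0_spec (hσ : IsPrimSeq W σ) (v : V nb nw) :
    σ (rk0 σ v) = v ∧ rk0 σ v < nb + nw := by
  have hv : v ∈ σ '' Set.Iio (nb + nw) := hσ.1 ▸ Set.mem_univ v
  obtain ⟨i, hi, hiv⟩ := hv
  have hi' : i < nb + nw := hi
  have hne : σ (sInf {j | σ j = v}) = v :=
    Nat.sInf_mem (⟨i, hiv⟩ : Set.Nonempty {j | σ j = v})
  refine ⟨hne, ?_⟩
  have hle : sInf {j | σ j = v} ≤ i := Nat.sInf_le (show i ∈ {j | σ j = v} from hiv)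
  show sInf {j | σ j = v} < nb + nw
  omega

lemma rk0_sigma (hσ : IsPrimSeq W σ) {i : ℕ} (hi : i < nb + nw) : rk0 σ (σ i) = i := by
  have h1 := (rk0_spec hσ (σ i)).1
  have h2 := (rk0_spec hσ (σ i)).2
  exact hσ.2.1 h2 hi h1

lemma mem_Sig_iff (hσ : IsPrimSeq W σ) {i : ℕ} (hi : i ≤ nb + nw) {v : V nb nw} :
    v ∈ Sig σ i ↔ rk0 σ v < i := by
  constructor
  · rintro ⟨j, hj, rfl⟩
    have hj' : j < i := hj
    rw [rk0_sigma hσ (lt_of_lt_of_le hj' hi)]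
    exact hj'
  · intro h
    exact ⟨rk0 σ v, h, (rk0_spec hσ v).1⟩

lemma mem_SigB_iff (hσ : IsPrimSeq W σ) {i : ℕ} (hi : i ≤ nb + nw) {v : V nb nw} :
    v ∈ SigB σ i ↔ v ∈ blacks nb nw ∧ rk0 σ v < i := by
  unfold SigB
  rw [Set.mem_inter_iff, mem_Sig_iff hσ hi]
  tauto

lemma Sig_succ (i : ℕ) : Sig σ (i + 1) = insert (σ i) (Sig σ i) := by
  unfold Sig
  have : Set.Iio (i + 1) = insert i (Set.Iio i) := by
    ext j; simp [Nat.lt_succ_iff_lt_or_eq]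
  rw [this, Set.image_insert_eq]

lemma SigB_mono {i j : ℕ} (h : i ≤ j) : SigB σ i ⊆ SigB σ j :=
  Set.inter_subset_inter_left _ (Set.image_mono (fun _ hx => lt_of_lt_of_le hx h))

lemma f_mono {i j : ℕ} (h : i ≤ j) : (SigB σ i).ncard ≤ (SigB σ j).ncard :=
  Set.ncard_le_ncard (SigB_mono h) (Set.toFinite _)

lemma f_zero : (SigB σ 0).ncard = 0 := by
  have h : SigB σ 0 = ∅ := by
    ext v
    simp only [SigB, Sig, Set.mem_inter_iff, Set.mem_image, Set.mem_Iio,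
      Set.mem_empty_iff_false, iff_false, not_and]
    rintro ⟨j, hj, -⟩
    omega
  rw [h, Set.ncard_empty]

lemma f_succ_black (hσ : IsPrimSeq W σ) {i : ℕ} (hi : i < nb + nw)
    (hb : σ i ∈ blacks nb nw) : (SigB σ (i + 1)).ncard = (SigB σ i).ncard + 1 := by
  have hnm : σ i ∉ SigB σ i := by
    rintro ⟨hmem, -⟩
    have := (mem_Sig_iff hσ (le_of_lt hi)).1 hmem
    rw [rk0_sigma hσ hi] at this
    omega
  have : SigB σ (i + 1) = insert (σ i) (SigB σ i) := by
    unfold SigB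
    rw [Sig_succ, Set.insert_inter_of_mem hb]
  rw [this, Set.ncard_insert_of_notMem hnm (Set.toFinite _)]

lemma f_succ_not {i : ℕ} (hb : σ i ∉ blacks nb nw) :
    (SigB σ (i + 1)).ncard = (SigB σ i).ncard := by
  have : SigB σ (i + 1) = SigB σ i := by
    unfold SigB
    rw [Sig_succ, Set.insert_inter_of_notMem hb]
  rw [this]

lemma ncard_blacks : (blacks nb nw).ncard = nb := by
  unfold blacks
  rw [← Nat.card_coe_set_eq, Nat.card_range_of_injective Sum.inl_injective]
  simp

lemma f_top (hσ : IsPrimSeq W σ) : (SigB σ (nb + nw)).ncard = nb := by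
  have : SigB σ (nb + nw) = blacks nb nw := by
    unfold SigB Sig
    rw [hσ.1, Set.univ_inter]
  rw [this, ncard_blacks]

lemma tb_spec (hσ : IsPrimSeq W σ) {k : ℕ} (hk1 : 1 ≤ k) (hk : k ≤ nb) :
    (SigB σ (tb σ k)).ncard = k ∧ (SigB σ (tb σ k - 1)).ncard = k - 1 ∧
      1 ≤ tb σ k ∧ tb σ k ≤ nb + nw ∧ σ (tb σ k - 1) ∈ blacks nb nw := by
  have hTn : nb + nw ∈ {j | k ≤ (SigB σ j).ncard} := by
    show k ≤ (SigB σ (nb + nw)).ncard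
    rw [f_top hσ]
    exact hk
  set m := sInf {j | k ≤ (SigB σ j).ncard} with hmdef
  have hmem : k ≤ (SigB σ m).ncard :=
    Nat.sInf_mem (⟨nb + nw, hTn⟩ : Set.Nonempty {j | k ≤ (SigB σ j).ncard})
  have hmle : m ≤ nb + nw := Nat.sInf_le hTn
  have hmpos : 0 < m := by
    by_contra h
    push_neg at h
    have h0 : m = 0 := by omega
    rw [h0, f_zero] at hmem
    omega
  have hprev : ¬ k ≤ (SigB σ (m - 1)).ncard := by
    intro hc
    have : m ≤ m - 1 := Nat.sInf_le (show m - 1 ∈ {j | k ≤ (SigB σ j).ncard} from hc)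
    omega
  have hm1n : m - 1 < nb + nw := by omega
  have hm1s : m - 1 + 1 = m := by omega
  have hblack : σ (m - 1) ∈ blacks nb nw := by
    by_contra hb
    have h2 := f_succ_not (σ := σ) (i := m - 1) hb
    rw [hm1s] at h2
    omega
  have hstep : (SigB σ m).ncard = (SigB σ (m - 1)).ncard + 1 := by
    have h2 := f_succ_black hσ hm1n hblack
    rw [hm1s] at h2
    exact h2
  have hfm : (SigB σ m).ncard = k := by omega
  have hfm1 : (SigB σ (m - 1)).ncard = k - 1 := by omega
  have htb : tb σ k = m := by
    have hle : tb σ k ≤ m :=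
      Nat.sInf_le (show m ∈ {i | (SigB σ i).ncard = k} from hfm)
    have hmemtb : (SigB σ (tb σ k)).ncard = k :=
      Nat.sInf_mem (⟨m, hfm⟩ : Set.Nonempty {i | (SigB σ i).ncard = k})
    have hge : m ≤ tb σ k :=
      Nat.sInf_le (show tb σ k ∈ {j | k ≤ (SigB σ j).ncard} from le_of_eq hmemtb.symm)
    omega
  rw [htb]
  exact ⟨hfm, hfm1, hmpos, hmle, hblack⟩

lemma tb_lt_tb (hσ : IsPrimSeq W σ) {j k : ℕ} (hj1 : 1 ≤ j) (hjk : j < k) (hk : k ≤ nb) :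
    tb σ j < tb σ k := by
  have h1 := (tb_spec hσ hj1 (by omega)).1
  have h2 := (tb_spec hσ (by omega) hk).1
  by_contra h
  push_neg at h
  have := f_mono (σ := σ) h
  omega

/-- There is an edge of weight `≤ p` across the cut at position `i`. -/
def CutLE (W : Fin nb → Fin nw → ℝ) (σ : ℕ → V nb nw) (p : ℝ) (i : ℕ) : Prop :=
  ∃ a b, a < i ∧ i ≤ b ∧ b < nb + nw ∧ wt W (σ a) (σ b) ≤ p

lemma prim_adj (hσ : IsPrimSeq W σ) {m : ℕ} (h0 : 0 < m) (hm : m < nb + nw)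
    (hc : CutLE W σ p m) : ∃ j, j < m ∧ (percGraph W p).Adj (σ j) (σ m) := by
  obtain ⟨j, hj, hmin⟩ := hσ.2.2 m h0 hm
  obtain ⟨a, b, ha, hb, hbn, hw⟩ := hc
  refine ⟨j, hj, ?_, le_trans (hmin a b ha hb hbn) hw⟩
  intro he
  exact absurd (hσ.2.1 (lt_trans hj hm) hm he) (Nat.ne_of_lt hj)

lemma cutle_of_adj {a b i : ℕ} (hb : b < nb + nw)
    (h : (percGraph W p).Adj (σ a) (σ b)) (hai : a < i) (hib : i ≤ b) : CutLE W σ p i :=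
  ⟨a, b, hai, hib, hb, h.2⟩

lemma core (hσ : IsPrimSeq W σ) (hp : p ≤ 1) {s t : ℕ}
    (hs : σ s ∈ blacks nb nw) (htb : σ t ∈ blacks nb nw) (hst : s < t) (htn : t < nb + nw)
    (hcut : ∀ i, s < i → i ≤ t → CutLE W σ p i) :
    ∃ w bb, (percGraph W p).Adj w (σ t) ∧ (percGraph W p).Adj w bb ∧
      bb ∈ blacks nb nw ∧ rk0 σ bb < t := by
  classical
  set S : Set ℕ := {i | i ≤ t ∧ ¬ CutLE W σ p i} with hS
  have h0S : 0 ∈ S := ⟨Nat.zero_le t, by rintro ⟨a, b, ha, -⟩; omega⟩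
  have hbdd : BddAbove S := ⟨t, fun x hx => hx.1⟩
  set s0 := sSup S with hs0def
  have hs0mem : s0 ∈ S := Nat.sSup_mem ⟨0, h0S⟩ hbdd
  have hs0t : s0 ≤ t := hs0mem.1
  have hs0cut : ¬ CutLE W σ p s0 := hs0mem.2
  have hcut' : ∀ i, s0 < i → i ≤ t → CutLE W σ p i := by
    intro i hi hit
    by_contra hc
    exact absurd (le_csSup hbdd (⟨hit, hc⟩ : i ∈ S)) (not_le.mpr hi)
  have hs0s : s0 ≤ s := by
    by_contra h
    push_neg at h
    exact hs0cut (hcut s0 h hs0t)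
  obtain ⟨j, hjt, hadj⟩ := prim_adj hσ (by omega) htn (hcut t (by omega) le_rfl)
  have hjs0 : s0 ≤ j := by
    by_contra h
    push_neg at h
    exact hs0cut ⟨j, t, h, by omega, htn, hadj.2⟩
  have hjw : σ j ∈ whites nb nw := adj_black_white hp hadj.symm htb
  rcases Nat.lt_or_ge s0 j with hj0 | hj0'
  · obtain ⟨j', hj', hadj'⟩ := prim_adj hσ (by omega) (by omega)
      (hcut' j hj0 (le_of_lt hjt))
    have hb : σ j' ∈ blacks nb nw := adj_white_black hp hadj'.symm hjw
    refine ⟨σ j, σ j', hadj, hadj'.symm, hb, ?_⟩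
    rw [rk0_sigma hσ (by omega)]
    omega
  · have hj0 : j = s0 := le_antisymm hj0' hjs0
    have hjs : j < s := by
      rcases Nat.lt_or_ge j s with h | h
      · exact h
      · exfalso
        have hje : j = s := by omega
        rw [hje] at hjw
        exact not_black_of_white hjw hs
    obtain ⟨j₂, hj₂, hadj₂⟩ := prim_adj hσ (by omega) (by omega)
      (hcut' (j + 1) (by omega) (by omega))
    have hj₂j : j ≤ j₂ := by
      by_contra h
      push_neg at h
      exact hs0cut ⟨j₂, j + 1, by omega, by omega, by omega, hadj₂.2⟩
    have hj₂eq : j₂ = j := by omega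
    rw [hj₂eq] at hadj₂
    have hb : σ (j + 1) ∈ blacks nb nw := adj_white_black hp hadj₂ hjw
    refine ⟨σ j, σ (j + 1), hadj, hadj₂, hb, ?_⟩
    rw [rk0_sigma hσ (by omega)]
    omega

end Aux

lemma mem_nbhd_iff {α : Type*} (G : SimpleGraph α) (A : Set α) (v : α) :
    v ∈ nbhd G A ↔ v ∉ A ∧ ∃ a ∈ A, G.Adj a v := Iff.rfl

lemma mem_nbhd2_iff {α : Type*} (G : SimpleGraph α) (A : Set α) (v : α) :
    v ∈ nbhd2 G A ↔ v ∈ nbhd G (nbhd G A) ∧ v ∉ A := Iff.rfl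


/-- Proposition `prop: prim-explore`: the ordering `σ^b` of the black
vertices produced by the 2-neighbourhood exploration of `G(n_b,n_w,p)` in Prim's order
(characterised below by its defining recursion) satisfies `σ^b(k) = σ(τ^b_k)` for every
`k ∈ [n_b]`. -/
theorem statement_5 {nb nw : ℕ} (hnb : 0 < nb) (hnw : 0 < nw)
    (W : Fin nb → Fin nw → ℝ) (σ : ℕ → V nb nw)
    (hW : GoodWeights W) (hσ : IsPrimSeq W σ)
    (p : ℝ) (hp : p ∈ Set.Icc (0:ℝ) 1)
    (sb : ℕ → V nb nw)
    -- Step 1: `σ^b(1)` is the black vertex of lowest Prim rank.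
    (h1 : sb 1 ∈ blacks nb nw ∧ ∀ v ∈ blacks nb nw, rk0 σ (sb 1) ≤ rk0 σ v)
    -- Step k ≥ 2: with `𝒜^b_{k−1} = N²({σ^b(1),…,σ^b(k−1)})`, the vertex `σ^b(k)` is the
    -- element of `𝒜^b_{k−1}` of lowest Prim rank if nonempty, and otherwise the element of
    -- `V^b ∖ {σ^b(1),…,σ^b(k−1)}` of lowest Prim rank.
    (hstep : ∀ k, 2 ≤ k → k ≤ nb →
      ((nbhd2 (percGraph W p) (sb '' Set.Icc 1 (k-1))).Nonempty →
        sb k ∈ nbhd2 (percGraph W p) (sb '' Set.Icc 1 (k-1)) ∧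
          ∀ v ∈ nbhd2 (percGraph W p) (sb '' Set.Icc 1 (k-1)), rk0 σ (sb k) ≤ rk0 σ v) ∧
      (¬ (nbhd2 (percGraph W p) (sb '' Set.Icc 1 (k-1))).Nonempty →
        sb k ∈ blacks nb nw \ (sb '' Set.Icc 1 (k-1)) ∧
          ∀ v ∈ blacks nb nw \ (sb '' Set.Icc 1 (k-1)), rk0 σ (sb k) ≤ rk0 σ v)) :
    ∀ k, 1 ≤ k → k ≤ nb → sb k = vat σ (tb σ k) := by
  
  have hp1 : p ≤ 1 := hp.2
  intro k
  induction k using Nat.strong_induction_on with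
  | _ k IH =>
    intro hk1 hknb
    rcases eq_or_lt_of_le hk1 with h1k | hk2
    · -- k = 1
      subst h1k
      obtain ⟨-, hf0, htb1, htbn, hblack⟩ := tb_spec hσ le_rfl hknb
      show sb 1 = σ (tb σ 1 - 1)
      have htn : tb σ 1 - 1 < nb + nw := by omega
      have hr : rk0 σ (σ (tb σ 1 - 1)) = tb σ 1 - 1 := rk0_sigma hσ htn
      have hub : rk0 σ (sb 1) ≤ tb σ 1 - 1 := by
        have := h1.2 _ hblack
        omega
      have hlb : tb σ 1 - 1 ≤ rk0 σ (sb 1) := by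
        by_contra h
        push_neg at h
        have hmem : sb 1 ∈ SigB σ (tb σ 1 - 1) :=
          (mem_SigB_iff hσ (by omega)).2 ⟨h1.1, h⟩
        have hemp : SigB σ (tb σ 1 - 1) = ∅ :=
          (Set.ncard_eq_zero (Set.toFinite _)).1 (by omega)
        rw [hemp] at hmem
        exact hmem
      have heq : rk0 σ (sb 1) = tb σ 1 - 1 := le_antisymm hub hlb
      calc sb 1 = σ (rk0 σ (sb 1)) := ((rk0_spec hσ (sb 1)).1).symm
        _ = σ (tb σ 1 - 1) := by rw [heq]
    · -- k ≥ 2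
      have hk2' : 2 ≤ k := hk2
      obtain ⟨hfk, hfk1, htbk1, htbkn, hblackk⟩ := tb_spec hσ (by omega) hknb
      set t := tb σ k - 1 with ht
      have htn : t < nb + nw := by omega
      have hσtb : σ t ∈ blacks nb nw := hblackk
      have hrt : rk0 σ (σ t) = t := rk0_sigma hσ htn
      have htle : t ≤ nb + nw := by omega
      -- the explored black set equals `SigB σ t`
      have himg : sb '' Set.Icc 1 (k - 1) = SigB σ t := by
        apply Set.Subset.antisymm
        · rintro v ⟨j, ⟨hj1, hjk⟩, rfl⟩
          have hjnb : j ≤ nb := by omega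
          have hjlt : j < k := by omega
          rw [IH j hjlt hj1 hjnb]
          obtain ⟨-, -, htbj1, htbjn, hbj⟩ := tb_spec hσ hj1 hjnb
          have htbjk : tb σ j < tb σ k := tb_lt_tb hσ hj1 hjlt hknb
          show σ (tb σ j - 1) ∈ SigB σ t
          refine (mem_SigB_iff hσ htle).2 ⟨hbj, ?_⟩
          rw [rk0_sigma hσ (by omega)]
          omega
        · intro v hv
          obtain ⟨hvb, hvr⟩ := (mem_SigB_iff hσ htle).1 hv
          have hrv : σ (rk0 σ v) = v := (rk0_spec hσ v).1
          have hrn : rk0 σ v < nb + nw := (rk0_spec hσ v).2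
          set r := rk0 σ v with hrdef
          have hstepr : (SigB σ (r + 1)).ncard = (SigB σ r).ncard + 1 :=
            f_succ_black hσ hrn (hrv ▸ hvb)
          set j := (SigB σ (r + 1)).ncard with hj
          have hjk1 : j ≤ k - 1 := by
            have h1' : (SigB σ (r + 1)).ncard ≤ (SigB σ t).ncard := f_mono (by omega)
            omega
          have hj1 : 1 ≤ j := by omega
          have htbj : tb σ j = r + 1 := by
            have hle : tb σ j ≤ r + 1 :=
              Nat.sInf_le (show r + 1 ∈ {i | (SigB σ i).ncard = j} from hj.symm)
            have hmemtb : (SigB σ (tb σ j)).ncard = j :=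
              Nat.sInf_mem (⟨r + 1, hj.symm⟩ : Set.Nonempty {i | (SigB σ i).ncard = j})
            by_contra hne
            have h2 : tb σ j ≤ r := by omega
            have h3 : (SigB σ (tb σ j)).ncard ≤ (SigB σ r).ncard := f_mono h2
            omega
          refine ⟨j, ⟨hj1, hjk1⟩, ?_⟩
          rw [IH j (by omega) hj1 (by omega)]
          show σ (tb σ j - 1) = v
          rw [htbj]
          simpa using hrv
      have hstepk := hstep k hk2' hknb
      rw [himg] at hstepk
      have hlow : ∀ v, v ∈ blacks nb nw → v ∉ SigB σ t → t ≤ rk0 σ v := by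
        intro v hb hnm
        by_contra h
        push_neg at h
        exact hnm ((mem_SigB_iff hσ htle).2 ⟨hb, h⟩)
      have hσtnm : σ t ∉ SigB σ t := by
        intro hmem
        have := ((mem_SigB_iff hσ htle).1 hmem).2
        omega
      have hnwhite : ∀ v ∈ nbhd (percGraph W p) (SigB σ t), v ∈ whites nb nw := by
        intro v hvm
        obtain ⟨-, a, ha, hadj⟩ := (mem_nbhd_iff _ _ _).1 hvm
        exact adj_black_white hp1 hadj ((mem_SigB_iff hσ htle).1 ha).1
      have hnb2 : ∀ v ∈ nbhd2 (percGraph W p) (SigB σ t),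
          v ∈ blacks nb nw ∧ t ≤ rk0 σ v := by
        intro v hvm
        obtain ⟨hvn, hvnm⟩ := (mem_nbhd2_iff _ _ _).1 hvm
        obtain ⟨-, w, hw, hadj⟩ := (mem_nbhd_iff _ _ _).1 hvn
        have hvb : v ∈ blacks nb nw := adj_white_black hp1 hadj (hnwhite w hw)
        exact ⟨hvb, hlow v hvb hvnm⟩
      by_cases hA : (nbhd2 (percGraph W p) (SigB σ t)).Nonempty
      · obtain ⟨hmem, hmin⟩ := hstepk.1 hA
        obtain ⟨v, hv⟩ := hA
        obtain ⟨hvn, hvnm⟩ := (mem_nbhd2_iff _ _ _).1 hv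
        obtain ⟨-, w, hw, hadjwv⟩ := (mem_nbhd_iff _ _ _).1 hvn
        obtain ⟨hwnm, u, hu, hadjuw⟩ := (mem_nbhd_iff _ _ _).1 hw
        have hub := (mem_SigB_iff hσ htle).1 hu
        have hsu : σ (rk0 σ u) = u := (rk0_spec hσ u).1
        have hst : rk0 σ u < t := hub.2
        have hvb : v ∈ blacks nb nw := adj_white_black hp1 hadjwv (hnwhite w hw)
        have hvt : t ≤ rk0 σ v := hlow v hvb hvnm
        have hswr : σ (rk0 σ w) = w := (rk0_spec hσ w).1
        have hsvr : σ (rk0 σ v) = v := (rk0_spec hσ v).1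
        have hrwn : rk0 σ w < nb + nw := (rk0_spec hσ w).2
        have hrvn : rk0 σ v < nb + nw := (rk0_spec hσ v).2
        have hcut : ∀ i, rk0 σ u < i → i ≤ t → CutLE W σ p i := by
          intro i hsi hit
          by_cases hi : i ≤ rk0 σ w
          · exact cutle_of_adj hrwn (by rw [hsu, hswr]; exact hadjuw) hsi hi
          · push_neg at hi
            exact cutle_of_adj hrvn (by rw [hswr, hsvr]; exact hadjwv) hi (by omega)
        obtain ⟨w', bb, hadj1, hadj2, hbbb, hbbr⟩ :=
          core hσ hp1 (show σ (rk0 σ u) ∈ blacks nb nw by rw [hsu]; exact hub.1) hσtb hst htn hcut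
        have hw'w : w' ∈ whites nb nw := adj_black_white hp1 hadj1.symm hσtb
        have hw'mem : w' ∈ nbhd (percGraph W p) (SigB σ t) := by
          refine (mem_nbhd_iff _ _ _).2 ⟨?_, bb, ?_, hadj2.symm⟩
          · intro hc
            exact not_black_of_white hw'w ((mem_SigB_iff hσ htle).1 hc).1
          · exact (mem_SigB_iff hσ htle).2 ⟨hbbb, hbbr⟩
        have hσtmem : σ t ∈ nbhd2 (percGraph W p) (SigB σ t) := by
          refine (mem_nbhd2_iff _ _ _).2 ⟨(mem_nbhd_iff _ _ _).2 ⟨?_, w', hw'mem, hadj1⟩, hσtnm⟩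
          intro hc
          exact not_black_of_white (hnwhite _ hc) hσtb
        have hub2 : rk0 σ (sb k) ≤ t := by
          have := hmin _ hσtmem
          omega
        have hlb2 : t ≤ rk0 σ (sb k) := (hnb2 _ hmem).2
        have heq : rk0 σ (sb k) = t := le_antisymm hub2 hlb2
        show sb k = σ t
        calc sb k = σ (rk0 σ (sb k)) := ((rk0_spec hσ (sb k)).1).symm
          _ = σ t := by rw [heq]
      · obtain ⟨hmem, hmin⟩ := hstepk.2 hA
        have hub2 : rk0 σ (sb k) ≤ t := by
          have := hmin (σ t) ⟨hσtb, hσtnm⟩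
          omega
        have hlb2 : t ≤ rk0 σ (sb k) := hlow _ hmem.1 hmem.2
        have heq : rk0 σ (sb k) = t := le_antisymm hub2 hlb2
        show sb k = σ t
        calc sb k = σ (rk0 σ (sb k)) := ((rk0_spec hσ (sb k)).1).symm
          _ = σ t := by rw [heq]
end

section
/- Let γ_θ = √((1−θ)/θ) with θ ∈ (0,1), and for λ > 1 let (q_1(λ), q_2(λ)) denote the unique solution in (0,1)² of the system x = e^{λγ_θ(y−1)}, y = e^{λγ_θ^{−1}(x−1)}. Then: (i) for i ∈ {1,2}, λ ↦ q_i(λ) is differentiable and strictly decreasing on (1,∞), with q_i(λ) → 1 as λ → 1+ and q_i(λ) → 0 as λ → ∞; (ii) as λ → 1+, q_1(λ) − 1 = γ_θ (q_2(λ) − 1) + o(|q_2(λ) − 1|). -/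
open Filter Set
open Topology Real

namespace S7

noncomputable def ff (γ l x : ℝ) : ℝ :=
  Real.log x - l * γ * (Real.exp (l * γ⁻¹ * (x - 1)) - 1)

lemma ff_one (γ l : ℝ) : ff γ l 1 = 0 := by simp [ff]

lemma ff_fix {γ lam x y : ℝ} (he1 : x = Real.exp (lam * γ * (y - 1)))
    (he2 : y = Real.exp (lam * γ⁻¹ * (x - 1))) : ff γ lam x = 0 := by
  have hl : Real.log x = lam * γ * (y - 1) := by rw [he1, Real.log_exp]
  rw [ff, hl, ← he2]; ring

lemma texp {t : ℝ} (ht : 0 < t) : t * Real.exp (-t) < 1 - Real.exp (-t) := by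
  have h := Real.add_one_lt_exp (ne_of_gt ht)
  have hp : (0:ℝ) < Real.exp t := Real.exp_pos t
  rw [Real.exp_neg]
  have hinv : Real.exp t * (Real.exp t)⁻¹ = 1 := mul_inv_cancel₀ (ne_of_gt hp)
  nlinarith [mul_pos (inv_pos.2 hp) (sub_pos.2 h)]

lemma prodlt {γ lam x y : ℝ} (hγ : 0 < γ) (hlam : 1 < lam)
    (hx : x ∈ Ioo (0:ℝ) 1) (hy : y ∈ Ioo (0:ℝ) 1)
    (he1 : x = Real.exp (lam * γ * (y - 1)))
    (he2 : y = Real.exp (lam * γ⁻¹ * (x - 1))) :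
    lam ^ 2 * x * y < 1 := by
  obtain ⟨hx0, hx1⟩ := hx; obtain ⟨hy0, hy1⟩ := hy
  have hγ' : 0 < γ⁻¹ := inv_pos.2 hγ
  have hl0 : 0 < lam := lt_trans one_pos hlam
  have ha : 0 < lam * γ * (1 - y) := mul_pos (mul_pos hl0 hγ) (by linarith)
  have hb : 0 < lam * γ⁻¹ * (1 - x) := mul_pos (mul_pos hl0 hγ') (by linarith)
  have h1 : lam * γ * (1 - y) * x < 1 - x := by
    have hx' : x = Real.exp (-(lam * γ * (1 - y))) := by rw [he1]; congr 1; ring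
    rw [hx']; exact texp ha
  have h2 : lam * γ⁻¹ * (1 - x) * y < 1 - y := by
    have hy' : y = Real.exp (-(lam * γ⁻¹ * (1 - x))) := by rw [he2]; congr 1; ring
    rw [hy']; exact texp hb
  have H := mul_lt_mul'' h1 h2 (by positivity) (by positivity)
  have hgg : γ * γ⁻¹ = 1 := mul_inv_cancel₀ (ne_of_gt hγ)
  have hEq : lam * γ * (1 - y) * x * (lam * γ⁻¹ * (1 - x) * y)
      = lam ^ 2 * x * y * ((1 - x) * (1 - y)) := by
    linear_combination (lam ^ 2 * x * y * (1 - x) * (1 - y)) * hgg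
  have key : lam ^ 2 * x * y * ((1 - x) * (1 - y)) < 1 * ((1 - x) * (1 - y)) := by
    rw [hEq] at H; linarith
  have hpos : (0:ℝ) < (1 - x) * (1 - y) := by nlinarith
  exact lt_of_mul_lt_mul_right (by linarith) (le_of_lt hpos)

lemma ff_strictConcave {γ lam : ℝ} (hγ : 0 < γ) (hlam : 0 < lam) :
    StrictConcaveOn ℝ (Ioi (0:ℝ)) (ff γ lam) := by
  have hconv : ConvexOn ℝ (univ : Set ℝ) (fun x => Real.exp (lam * γ⁻¹ * (x - 1))) := by
    refine ⟨convex_univ, ?_⟩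
    intro x _ y _ a b ha hb hab
    have h := convexOn_exp.2 (mem_univ (lam * γ⁻¹ * (x - 1)))
      (mem_univ (lam * γ⁻¹ * (y - 1))) ha hb hab
    simp only [smul_eq_mul] at h ⊢
    have harg : lam * γ⁻¹ * ((a * x + b * y) - 1)
        = a * (lam * γ⁻¹ * (x - 1)) + b * (lam * γ⁻¹ * (y - 1)) := by
      linear_combination (lam * γ⁻¹) * hab
    rw [harg]; exact h
  have h3 : ConvexOn ℝ (univ : Set ℝ)
      (fun x => lam * γ * (Real.exp (lam * γ⁻¹ * (x - 1)) - 1)) := by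
    have h4 := (hconv.sub (concaveOn_const (1:ℝ) convex_univ)).smul
      (show (0:ℝ) ≤ lam * γ by positivity)
    exact h4
  have hcc : ConcaveOn ℝ (Ioi (0:ℝ))
      (fun x => -(lam * γ * (Real.exp (lam * γ⁻¹ * (x - 1)) - 1))) := by
    exact h3.neg.subset (subset_univ _) (convex_Ioi 0)
  have hs := strictConcaveOn_log_Ioi.add_concaveOn hcc
  have heq : ff γ lam = (Real.log +
      fun x => -(lam * γ * (Real.exp (lam * γ⁻¹ * (x - 1)) - 1))) := by
    funext x
    simp only [ff, Pi.add_apply]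
    ring
  rw [heq]; exact hs

lemma ff_neg_of_lt {γ lam q x : ℝ} (hγ : 0 < γ) (hlam : 0 < lam) (hq : q ∈ Ioo (0:ℝ) 1)
    (hfq : ff γ lam q = 0) (hx : 0 < x) (hxq : x < q) : ff γ lam x < 0 := by
  have hs := ff_strictConcave hγ hlam
  have hx1 : x < 1 := hxq.trans hq.2
  have hne : (1:ℝ) - x ≠ 0 := by intro h; linarith
  set t := (1 - q) / (1 - x) with ht
  have ht0 : 0 < t := div_pos (by linarith [hq.2]) (by linarith)
  have ht1 : t < 1 := by rw [div_lt_one (by linarith)]; linarith [hxq]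
  have hc := hs.2 (mem_Ioi.2 hx) (mem_Ioi.2 one_pos) (ne_of_lt hx1) ht0
    (by linarith : (0:ℝ) < 1 - t) (by ring)
  simp only [smul_eq_mul] at hc
  have hq' : t * x + (1 - t) * 1 = q := by rw [ht]; field_simp; ring
  rw [hq', hfq, ff_one, mul_zero, add_zero] at hc
  nlinarith [hc, ht0]

lemma ff_pos_of_gt {γ lam q x : ℝ} (hγ : 0 < γ) (hlam : 0 < lam) (hq : q ∈ Ioo (0:ℝ) 1)
    (hfq : ff γ lam q = 0) (hqx : q < x) (hx1 : x < 1) : 0 < ff γ lam x := by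
  have hs := ff_strictConcave hγ hlam
  have hne : (1:ℝ) - q ≠ 0 := by intro h; linarith [hq.2]
  set t := (1 - x) / (1 - q) with ht
  have ht0 : 0 < t := div_pos (by linarith) (by linarith [hq.2])
  have ht1 : t < 1 := by rw [div_lt_one (by linarith [hq.2])]; linarith
  have hc := hs.2 (mem_Ioi.2 hq.1) (mem_Ioi.2 one_pos) (ne_of_lt hq.2) ht0
    (by linarith : (0:ℝ) < 1 - t) (by ring)
  simp only [smul_eq_mul] at hc
  have hq' : t * q + (1 - t) * 1 = x := by rw [ht]; field_simp; ring
  rw [hq', hfq, ff_one] at hc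
  simpa using hc

lemma lt_of_ff_neg {γ lam q x : ℝ} (hγ : 0 < γ) (hlam : 0 < lam) (hq : q ∈ Ioo (0:ℝ) 1)
    (hfq : ff γ lam q = 0) (hx : x ∈ Ioo (0:ℝ) 1) (h : ff γ lam x < 0) : x < q := by
  rcases lt_trichotomy x q with h' | h' | h'
  · exact h'
  · exfalso; rw [h', hfq] at h; exact lt_irrefl 0 h
  · exact absurd (ff_pos_of_gt hγ hlam hq hfq h' hx.2) (by linarith)

lemma gt_of_ff_pos {γ lam q x : ℝ} (hγ : 0 < γ) (hlam : 0 < lam) (hq : q ∈ Ioo (0:ℝ) 1)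
    (hfq : ff γ lam q = 0) (hx : x ∈ Ioo (0:ℝ) 1) (h : 0 < ff γ lam x) : q < x := by
  rcases lt_trichotomy x q with h' | h' | h'
  · exact absurd (ff_neg_of_lt hγ hlam hq hfq hx.1 h') (by linarith)
  · exfalso; rw [h', hfq] at h; exact lt_irrefl 0 h
  · exact h'

lemma q_diff_aux {γ lam₀ q₀ : ℝ} (hγ : 0 < γ) (hq₀ : 0 < q₀)
    (hB : q₀⁻¹ - lam₀ ^ 2 * Real.exp (lam₀ * γ⁻¹ * (q₀ - 1)) ≠ 0)
    {q : ℝ → ℝ} (hq : ContinuousAt q lam₀) (hqv : q lam₀ = q₀)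
    (hz : ∀ᶠ l in 𝓝 lam₀, ff γ l (q l) = 0) :
    DifferentiableAt ℝ q lam₀ := by
  classical
  set p₀ : ℝ × ℝ := (lam₀, q₀) with hp₀def
  set FF : ℝ × ℝ → ℝ := fun p => Real.log p.2 - p.1 * γ * (Real.exp (p.1 * γ⁻¹ * (p.2 - 1)) - 1)
    with hFFdef
  have h_fst : HasStrictFDerivAt (fun p : ℝ × ℝ => p.1) (ContinuousLinearMap.fst ℝ ℝ ℝ) p₀ :=
    hasStrictFDerivAt_fst
  have h_snd : HasStrictFDerivAt (fun p : ℝ × ℝ => p.2) (ContinuousLinearMap.snd ℝ ℝ ℝ) p₀ :=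
    hasStrictFDerivAt_snd
  have hlog' : HasStrictFDerivAt (fun p : ℝ × ℝ => Real.log p.2)
      (q₀⁻¹ • ContinuousLinearMap.snd ℝ ℝ ℝ) p₀ :=
    (Real.hasStrictDerivAt_log (ne_of_gt hq₀)).comp_hasStrictFDerivAt (h₂ := Real.log) p₀ h_snd
  have hinner := (h_fst.mul_const γ⁻¹).mul (h_snd.sub_const (1:ℝ))
  have hexp := hinner.exp
  have houter := (h_fst.mul_const γ).mul (hexp.sub_const (1:ℝ))
  have hF0 := hlog'.sub houter
  replace hF0 : HasStrictFDerivAt FF _ p₀ := hF0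
  have hfderiv := hF0.hasFDerivAt.fderiv
  set D : (ℝ × ℝ) →L[ℝ] ℝ := fderiv ℝ FF p₀ with hDdef
  have hFd : HasStrictFDerivAt FF D p₀ := by rw [hfderiv]; exact hF0
  set A : ℝ := D (1, 0) with hAdef
  set B : ℝ := D (0, 1) with hBdef
  have hDlin : ∀ u v : ℝ, D (u, v) = u * A + v * B := by
    intro u v
    have h : (u, v) = u • ((1:ℝ), (0:ℝ)) + v • ((0:ℝ), (1:ℝ)) := by
      simp [Prod.ext_iff]
    rw [h, map_add, map_smul, map_smul, smul_eq_mul, smul_eq_mul, hAdef, hBdef]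
  have hBval : B = q₀⁻¹ - lam₀ ^ 2 * Real.exp (lam₀ * γ⁻¹ * (q₀ - 1)) := by
    rw [hBdef, hfderiv]
    simp only [ContinuousLinearMap.coe_sub', Pi.sub_apply, ContinuousLinearMap.add_apply,
      ContinuousLinearMap.coe_smul', Pi.smul_apply, ContinuousLinearMap.smul_apply,
      ContinuousLinearMap.coe_fst', ContinuousLinearMap.coe_snd', smul_eq_mul, hp₀def, Pi.mul_apply]
    field_simp
    ring
  have hBne : B ≠ 0 := by rw [hBval]; exact hB
  -- the continuous linear equiv
  set L2 : (ℝ × ℝ) →L[ℝ] (ℝ × ℝ) := (ContinuousLinearMap.fst ℝ ℝ ℝ).prod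
    (B⁻¹ • (ContinuousLinearMap.snd ℝ ℝ ℝ - A • ContinuousLinearMap.fst ℝ ℝ ℝ)) with hL2def
  set L1 : (ℝ × ℝ) →L[ℝ] (ℝ × ℝ) := (ContinuousLinearMap.fst ℝ ℝ ℝ).prod D with hL1def
  have hleft : Function.LeftInverse L2 L1 := by
    intro p
    obtain ⟨u, v⟩ := p
    have hD := hDlin u v
    apply Prod.ext_iff.2
    constructor
    · simp [hL1def, hL2def]
    · simp [hL1def, hL2def, hD]
      field_simp
      ring
  have hright : Function.RightInverse L2 L1 := by
    intro p
    obtain ⟨u, v⟩ := p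
    have hD := hDlin u (B⁻¹ * (v - A * u))
    apply Prod.ext_iff.2
    constructor
    · simp [hL1def, hL2def]
    · simp [hL1def, hL2def, hD]
      field_simp
      ring
  set eqv : (ℝ × ℝ) ≃L[ℝ] (ℝ × ℝ) :=
    ContinuousLinearEquiv.equivOfInverse L1 L2 hleft hright with heqvdef
  set Ψ : ℝ × ℝ → ℝ × ℝ := fun p => (p.1, FF p) with hΨdef
  have hΨ : HasStrictFDerivAt Ψ (eqv : (ℝ × ℝ) →L[ℝ] (ℝ × ℝ)) p₀ := h_fst.prodMk hFd
  have hFFz : FF p₀ = 0 := by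
    have h1 := hz.self_of_nhds
    rw [hqv] at h1
    simpa [hFFdef, hp₀def, ff] using h1
  have hΨp₀ : Ψ p₀ = (lam₀, 0) := Prod.ext_iff.2 ⟨rfl, hFFz⟩
  set g := hΨ.localInverse Ψ eqv p₀ with hgdef
  have hgs : HasStrictFDerivAt g (eqv.symm : (ℝ × ℝ) →L[ℝ] (ℝ × ℝ)) (lam₀, 0) := by
    rw [← hΨp₀]; exact hΨ.to_localInverse
  have hlinv : ∀ᶠ p in 𝓝 p₀, g (Ψ p) = p := hΨ.eventually_left_inverse
  have hcurve : Tendsto (fun l => (l, q l)) (𝓝 lam₀) (𝓝 p₀) := by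
    rw [hp₀def, ← hqv]
    exact (continuousAt_id.prodMk hq)
  have hev2 : ∀ᶠ l in 𝓝 lam₀, g (Ψ (l, q l)) = (l, q l) := hcurve.eventually hlinv
  have hev3 : ∀ᶠ l in 𝓝 lam₀, Ψ (l, q l) = (l, 0) := by
    filter_upwards [hz] with l hl
    exact Prod.ext_iff.2 ⟨rfl, by simpa [hFFdef, ff] using hl⟩
  have hev4 : q =ᶠ[𝓝 lam₀] fun l => (g (l, 0)).2 := by
    filter_upwards [hev2, hev3] with l h2 h3
    rw [h3] at h2
    rw [h2]
  have hφ : DifferentiableAt ℝ (fun l => (g (l, 0)).2) lam₀ := by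
    have hpair : DifferentiableAt ℝ (fun l : ℝ => ((l, (0:ℝ)) : ℝ × ℝ)) lam₀ :=
      differentiableAt_id.prodMk (differentiableAt_const 0)
    exact (hgs.differentiableAt.comp lam₀ hpair).snd
  exact hev4.differentiableAt_iff.2 hφ

lemma ff_pos_of_larger {γ l m x : ℝ} (hγ : 0 < γ) (h1 : 1 < l) (hlm : l < m)
    (hx : x ∈ Ioo (0:ℝ) 1)
    (hlog : Real.log x = l * γ * (Real.exp (l * γ⁻¹ * (x - 1)) - 1)) :
    0 < ff γ m x := by
  have hγ' : 0 < γ⁻¹ := inv_pos.2 hγ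
  have hx1 : x - 1 < 0 := by linarith [hx.2]
  have hl0 : 0 < l := lt_trans one_pos h1
  have hel : l * γ⁻¹ * (x - 1) < 0 := mul_neg_of_pos_of_neg (mul_pos hl0 hγ') hx1
  have hem : m * γ⁻¹ * (x - 1) < l * γ⁻¹ * (x - 1) := by nlinarith
  have h2 : Real.exp (m * γ⁻¹ * (x - 1)) < Real.exp (l * γ⁻¹ * (x - 1)) := Real.exp_lt_exp.2 hem
  have h3 : Real.exp (l * γ⁻¹ * (x - 1)) < 1 := Real.exp_lt_one_iff.2 hel
  have key : l * (1 - Real.exp (l * γ⁻¹ * (x - 1))) < m * (1 - Real.exp (m * γ⁻¹ * (x - 1))) := by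
    nlinarith
  rw [ff, hlog]
  nlinarith

lemma ff_one_lam_neg {γ a : ℝ} (hγ : 0 < γ) (ha : a ∈ Ioo (0:ℝ) 1) : ff γ 1 a < 0 := by
  have h1 : Real.log a ≤ a - 1 := Real.log_le_sub_one_of_pos ha.1
  have hne : γ⁻¹ * (a - 1) ≠ 0 := by
    have : a - 1 < 0 := by linarith [ha.2]
    have := mul_neg_of_pos_of_neg (inv_pos.2 hγ) this
    exact ne_of_lt this
  have h3 := Real.add_one_lt_exp hne
  have hgg : γ * γ⁻¹ = 1 := mul_inv_cancel₀ (ne_of_gt hγ)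
  have harg : (1:ℝ) * γ⁻¹ * (a - 1) = γ⁻¹ * (a - 1) := by ring
  have h4 : γ * (γ⁻¹ * (a - 1)) < γ * (Real.exp (γ⁻¹ * (a - 1)) - 1) :=
    mul_lt_mul_of_pos_left (by linarith) hγ
  have h5 : γ * (γ⁻¹ * (a - 1)) = a - 1 := by
    rw [← mul_assoc, hgg, one_mul]
  rw [ff, harg]
  nlinarith

end S7


/-- Lemma `lem: solv'`: let `γ_θ = √((1−θ)/θ)` and, for `λ > 1`, let
`(q₁(λ), q₂(λ))` be the unique solution in `(0,1)²` of the fixed-point system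
`x = e^{λγ(y−1)}`, `y = e^{λγ⁻¹(x−1)}`. Then each `q_i` is differentiable and strictly
decreasing on `(1,∞)`, with `q_i(1+) = 1` and `q_i(∞) = 0`; moreover, as `λ → 1+`,
`q₁(λ) − 1 = γ_θ (q₂(λ) − 1) + o(|q₂(λ) − 1|)`. -/
theorem statement_7 (θ : ℝ) (hθ : θ ∈ Set.Ioo (0:ℝ) 1)
    (γ : ℝ) (hγ : γ = Real.sqrt ((1 - θ) / θ))
    (q₁ q₂ : ℝ → ℝ)
    (hsol : ∀ lam, 1 < lam →
      q₁ lam ∈ Set.Ioo (0:ℝ) 1 ∧ q₂ lam ∈ Set.Ioo (0:ℝ) 1 ∧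
      q₁ lam = Real.exp (lam * γ * (q₂ lam - 1)) ∧
      q₂ lam = Real.exp (lam * γ⁻¹ * (q₁ lam - 1)))
    (huniq : ∀ lam, 1 < lam → ∀ x y : ℝ, x ∈ Set.Ioo (0:ℝ) 1 → y ∈ Set.Ioo (0:ℝ) 1 →
      x = Real.exp (lam * γ * (y - 1)) → y = Real.exp (lam * γ⁻¹ * (x - 1)) →
      x = q₁ lam ∧ y = q₂ lam) :
    -- (i)
    ((∀ lam ∈ Set.Ioi (1:ℝ), DifferentiableAt ℝ q₁ lam) ∧
     (∀ lam ∈ Set.Ioi (1:ℝ), DifferentiableAt ℝ q₂ lam) ∧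
     StrictAntiOn q₁ (Set.Ioi 1) ∧ StrictAntiOn q₂ (Set.Ioi 1) ∧
     Tendsto q₁ (nhdsWithin 1 (Set.Ioi 1)) (nhds 1) ∧
     Tendsto q₂ (nhdsWithin 1 (Set.Ioi 1)) (nhds 1) ∧
     Tendsto q₁ atTop (nhds 0) ∧ Tendsto q₂ atTop (nhds 0)) ∧
    -- (ii)
    (fun lam => (q₁ lam - 1) - γ * (q₂ lam - 1)) =o[nhdsWithin 1 (Set.Ioi 1)]
      (fun lam => |q₂ lam - 1|) := by
  obtain ⟨hθ0, hθ1⟩ := hθ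
  have hγ0 : 0 < γ := by
    rw [hγ]; exact Real.sqrt_pos.2 (div_pos (by linarith) hθ0)
  have hγi : 0 < γ⁻¹ := inv_pos.2 hγ0
  have hfix : ∀ lam, 1 < lam → S7.ff γ lam (q₁ lam) = 0 := fun lam hl =>
    S7.ff_fix (hsol lam hl).2.2.1 (hsol lam hl).2.2.2
  have hlog : ∀ lam, 1 < lam →
      Real.log (q₁ lam) = lam * γ * (Real.exp (lam * γ⁻¹ * (q₁ lam - 1)) - 1) := by
    intro lam hl
    conv_lhs => rw [(hsol lam hl).2.2.1]
    rw [Real.log_exp, ← (hsol lam hl).2.2.2]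
  have hanti1 : StrictAntiOn q₁ (Set.Ioi 1) := by
    intro l hl m hm hlm
    exact S7.gt_of_ff_pos hγ0 (lt_trans one_pos (mem_Ioi.1 hm)) (hsol m hm).1 (hfix m hm)
      (hsol l hl).1 (S7.ff_pos_of_larger hγ0 (mem_Ioi.1 hl) hlm (hsol l hl).1 (hlog l hl))
  have hanti2 : StrictAntiOn q₂ (Set.Ioi 1) := by
    intro l hl m hm hlm
    have hl' : 1 < l := hl
    have hm' : 1 < m := hm
    have h1 : q₁ m < q₁ l := hanti1 hl hm hlm
    rw [(hsol m hm').2.2.2, (hsol l hl').2.2.2]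
    apply Real.exp_lt_exp.2
    have hq1l : q₁ l < 1 := (hsol l hl').1.2
    have hA : m * γ⁻¹ * (q₁ m - 1) < m * γ⁻¹ * (q₁ l - 1) :=
      mul_lt_mul_of_pos_left (by linarith) (mul_pos (by linarith) hγi)
    have hB : m * γ⁻¹ * (q₁ l - 1) ≤ l * γ⁻¹ * (q₁ l - 1) := by
      nlinarith [mul_nonneg (mul_nonneg (le_of_lt (sub_pos.2 hlm)) (le_of_lt hγi))
        (le_of_lt (sub_pos.2 hq1l))]
    linarith
  have hcont : ∀ lam₀, 1 < lam₀ → ContinuousAt q₁ lam₀ := by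
    intro lam₀ h0
    have hmem : Set.Ioi (1:ℝ) ∈ 𝓝 lam₀ := isOpen_Ioi.mem_nhds h0
    have hq0 := (hsol lam₀ h0).1
    rw [ContinuousAt]
    apply tendsto_order.2
    constructor
    · intro a ha
      rcases le_or_gt a 0 with h | h
      · filter_upwards [hmem] with l hl
        exact lt_of_le_of_lt h (hsol l hl).1.1
      · have haI : a ∈ Set.Ioo (0:ℝ) 1 := ⟨h, lt_trans ha hq0.2⟩
        have hneg : S7.ff γ lam₀ a < 0 :=
          S7.ff_neg_of_lt hγ0 (lt_trans one_pos h0) hq0 (hfix lam₀ h0) h ha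
        have hc : ContinuousAt (fun l => S7.ff γ l a) lam₀ := by
          unfold S7.ff; fun_prop
        filter_upwards [hmem, Filter.Tendsto.eventually_lt_const hneg hc] with l hl hfl
        exact S7.lt_of_ff_neg hγ0 (lt_trans one_pos hl) (hsol l hl).1 (hfix l hl) haI hfl
    · intro b hb
      rcases le_or_gt 1 b with h | h
      · filter_upwards [hmem] with l hl
        exact lt_of_lt_of_le (hsol l hl).1.2 h
      · have hbI : b ∈ Set.Ioo (0:ℝ) 1 := ⟨lt_trans hq0.1 hb, h⟩
        have hpos : 0 < S7.ff γ lam₀ b :=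
          S7.ff_pos_of_gt hγ0 (lt_trans one_pos h0) hq0 (hfix lam₀ h0) hb h
        have hc : ContinuousAt (fun l => S7.ff γ l b) lam₀ := by
          unfold S7.ff; fun_prop
        filter_upwards [hmem, Filter.Tendsto.eventually_const_lt hpos hc] with l hl hfl
        exact S7.gt_of_ff_pos hγ0 (lt_trans one_pos hl) (hsol l hl).1 (hfix l hl) hbI hfl
  have hdiff1 : ∀ lam ∈ Set.Ioi (1:ℝ), DifferentiableAt ℝ q₁ lam := by
    intro lam₀ h0
    have h0' : 1 < lam₀ := h0
    have hq0 := (hsol lam₀ h0').1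
    have hmem : Set.Ioi (1:ℝ) ∈ 𝓝 lam₀ := isOpen_Ioi.mem_nhds h0'
    have hBpos : 0 < (q₁ lam₀)⁻¹ - lam₀ ^ 2 * Real.exp (lam₀ * γ⁻¹ * (q₁ lam₀ - 1)) := by
      have hp := S7.prodlt hγ0 h0' hq0 (hsol lam₀ h0').2.1 (hsol lam₀ h0').2.2.1
        (hsol lam₀ h0').2.2.2
      rw [← (hsol lam₀ h0').2.2.2]
      have h1 : 0 < q₁ lam₀ := hq0.1
      have h2 : 0 < q₂ lam₀ := (hsol lam₀ h0').2.1.1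
      have h3 : q₁ lam₀ * (q₁ lam₀)⁻¹ = 1 := mul_inv_cancel₀ (ne_of_gt h1)
      nlinarith [hp, h1, h2, h3]
    exact S7.q_diff_aux hγ0 hq0.1 (ne_of_gt hBpos) (hcont lam₀ h0') rfl
      (by filter_upwards [hmem] with l hl; exact hfix l hl)
  have hdiff2 : ∀ lam ∈ Set.Ioi (1:ℝ), DifferentiableAt ℝ q₂ lam := by
    intro lam₀ h0
    have h0' : 1 < lam₀ := h0
    have hmem : Set.Ioi (1:ℝ) ∈ 𝓝 lam₀ := isOpen_Ioi.mem_nhds h0'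
    have hev : q₂ =ᶠ[𝓝 lam₀] fun l => Real.exp (l * γ⁻¹ * (q₁ l - 1)) := by
      filter_upwards [hmem] with l hl; exact (hsol l hl).2.2.2
    exact hev.differentiableAt_iff.2
      (((differentiableAt_id.mul_const γ⁻¹).mul ((hdiff1 lam₀ h0).sub_const 1)).exp)
  have hlim1 : Tendsto q₁ (𝓝[>] (1:ℝ)) (𝓝 1) := by
    apply tendsto_order.2
    constructor
    · intro a ha
      rcases le_or_gt a 0 with h | h
      · filter_upwards [self_mem_nhdsWithin] with l hl
        exact lt_of_le_of_lt h (hsol l hl).1.1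
      · have haI : a ∈ Set.Ioo (0:ℝ) 1 := ⟨h, ha⟩
        have hneg : S7.ff γ 1 a < 0 := S7.ff_one_lam_neg hγ0 haI
        have hc : ContinuousAt (fun l => S7.ff γ l a) 1 := by unfold S7.ff; fun_prop
        have hev : ∀ᶠ l in 𝓝 (1:ℝ), S7.ff γ l a < 0 :=
          Filter.Tendsto.eventually_lt_const hneg hc
        filter_upwards [self_mem_nhdsWithin,
          eventually_nhdsWithin_of_eventually_nhds hev] with l hl hfl
        exact S7.lt_of_ff_neg hγ0 (lt_trans one_pos hl) (hsol l hl).1 (hfix l hl) haI hfl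
    · intro b hb
      filter_upwards [self_mem_nhdsWithin] with l hl
      exact lt_trans (hsol l hl).1.2 hb
  have hlim2 : Tendsto q₂ (𝓝[>] (1:ℝ)) (𝓝 1) := by
    have hid : Tendsto (fun l : ℝ => l) (𝓝[>] (1:ℝ)) (𝓝 1) :=
      tendsto_id.mono_left nhdsWithin_le_nhds
    have harg : Tendsto (fun l => l * γ⁻¹ * (q₁ l - 1)) (𝓝[>] (1:ℝ)) (𝓝 (1 * γ⁻¹ * (1 - 1))) :=
      (hid.mul tendsto_const_nhds).mul (hlim1.sub tendsto_const_nhds)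
    rw [show (1:ℝ) * γ⁻¹ * (1 - 1) = 0 by ring] at harg
    have hexp : Tendsto (fun l => Real.exp (l * γ⁻¹ * (q₁ l - 1))) (𝓝[>] (1:ℝ)) (𝓝 1) := by
      have := (Real.continuous_exp.tendsto 0).comp harg
      rwa [Real.exp_zero] at this
    apply Filter.Tendsto.congr' _ hexp
    filter_upwards [self_mem_nhdsWithin] with l hl
    exact ((hsol l hl).2.2.2).symm
  have hlim3 : Tendsto q₁ atTop (𝓝 0) := by
    have hq22 : q₂ 2 < 1 := (hsol 2 one_lt_two).2.1.2
    have hC : γ * (q₂ 2 - 1) < 0 := mul_neg_of_pos_of_neg hγ0 (by linarith)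
    have hbt : Tendsto (fun l : ℝ => l * (γ * (q₂ 2 - 1))) atTop atBot :=
      (tendsto_mul_const_atBot_of_neg hC).2 tendsto_id
    have hb : Tendsto (fun l : ℝ => Real.exp (l * (γ * (q₂ 2 - 1)))) atTop (𝓝 0) :=
      Real.tendsto_exp_atBot.comp hbt
    apply tendsto_of_tendsto_of_tendsto_of_le_of_le' tendsto_const_nhds hb
    · filter_upwards [eventually_gt_atTop (2:ℝ)] with l hl
      exact le_of_lt (hsol l (by linarith)).1.1
    · filter_upwards [eventually_gt_atTop (2:ℝ)] with l hl
      have hl1 : 1 < l := by linarith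
      have hql : q₂ l < q₂ 2 := hanti2 (mem_Ioi.2 one_lt_two) (mem_Ioi.2 hl1) hl
      rw [(hsol l hl1).2.2.1]
      apply Real.exp_le_exp.2
      nlinarith [mul_nonneg (mul_nonneg (by linarith : (0:ℝ) ≤ l) (le_of_lt hγ0))
        (le_of_lt (sub_pos.2 hql))]
  have hlim4 : Tendsto q₂ atTop (𝓝 0) := by
    have hq12 : q₁ 2 < 1 := (hsol 2 one_lt_two).1.2
    have hC : γ⁻¹ * (q₁ 2 - 1) < 0 := mul_neg_of_pos_of_neg hγi (by linarith)
    have hbt : Tendsto (fun l : ℝ => l * (γ⁻¹ * (q₁ 2 - 1))) atTop atBot :=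
      (tendsto_mul_const_atBot_of_neg hC).2 tendsto_id
    have hb : Tendsto (fun l : ℝ => Real.exp (l * (γ⁻¹ * (q₁ 2 - 1)))) atTop (𝓝 0) :=
      Real.tendsto_exp_atBot.comp hbt
    apply tendsto_of_tendsto_of_tendsto_of_le_of_le' tendsto_const_nhds hb
    · filter_upwards [eventually_gt_atTop (2:ℝ)] with l hl
      exact le_of_lt (hsol l (by linarith)).2.1.1
    · filter_upwards [eventually_gt_atTop (2:ℝ)] with l hl
      have hl1 : 1 < l := by linarith
      have hql : q₁ l < q₁ 2 := hanti1 (mem_Ioi.2 one_lt_two) (mem_Ioi.2 hl1) hl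
      rw [(hsol l hl1).2.2.2]
      apply Real.exp_le_exp.2
      nlinarith [mul_nonneg (mul_nonneg (by linarith : (0:ℝ) ≤ l) (le_of_lt hγi))
        (le_of_lt (sub_pos.2 hql))]
  have ho : (fun lam => (q₁ lam - 1) - γ * (q₂ lam - 1)) =o[𝓝[>] (1:ℝ)]
      fun lam => |q₂ lam - 1| := by
    have hidt : Tendsto (fun l : ℝ => l) (𝓝[>] (1:ℝ)) (𝓝 1) :=
      tendsto_id.mono_left nhdsWithin_le_nhds
    have o1 : (fun l => Real.exp (l * γ * (q₂ l - 1)) - 1 - l * γ * (q₂ l - 1))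
        =o[𝓝[>] (1:ℝ)] fun l => |q₂ l - 1| := by
      rw [Asymptotics.isLittleO_iff]
      intro c hc
      set δ := min ((2 * γ)⁻¹) (c / (4 * γ ^ 2)) with hδdef
      have hδ : 0 < δ := lt_min (by positivity) (by positivity)
      have hev1 : ∀ᶠ l in 𝓝[>] (1:ℝ), l < 2 :=
        eventually_nhdsWithin_of_eventually_nhds
          (eventually_of_mem (Iio_mem_nhds one_lt_two) (fun x hx => hx))
      have hev2 : ∀ᶠ l in 𝓝[>] (1:ℝ), |q₂ l - 1| < δ := by
        have := Metric.tendsto_nhds.1 hlim2 δ hδ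
        filter_upwards [this] with l hl
        rwa [Real.dist_eq] at hl
      filter_upwards [self_mem_nhdsWithin, hev1, hev2] with l hl1 hl2 hd
      have hl1' : 1 < l := hl1
      have hm0 : 0 ≤ |q₂ l - 1| := abs_nonneg _
      have hmd1 : |q₂ l - 1| ≤ (2 * γ)⁻¹ := le_of_lt (lt_of_lt_of_le hd (min_le_left _ _))
      have hmd2 : |q₂ l - 1| ≤ c / (4 * γ ^ 2) := le_of_lt (lt_of_lt_of_le hd (min_le_right _ _))
      have ht : |l * γ * (q₂ l - 1)| = l * γ * |q₂ l - 1| := by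
        rw [abs_mul, abs_of_pos (mul_pos (lt_trans one_pos hl1') hγ0)]
      have htle : |l * γ * (q₂ l - 1)| ≤ 1 := by
        rw [ht]
        have h2γ : (0:ℝ) < 2 * γ := by positivity
        have h5 : 2 * γ * (2 * γ)⁻¹ = 1 := mul_inv_cancel₀ (ne_of_gt h2γ)
        have h6 : 2 * γ * |q₂ l - 1| ≤ 2 * γ * (2 * γ)⁻¹ :=
          mul_le_mul_of_nonneg_left hmd1 (le_of_lt h2γ)
        nlinarith [mul_nonneg (mul_nonneg (le_of_lt (sub_pos.2 hl2)) (le_of_lt hγ0)) hm0]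
      have hkey := Real.abs_exp_sub_one_sub_id_le htle
      rw [Real.norm_eq_abs, Real.norm_eq_abs, abs_abs]
      have hsq : (l * γ * (q₂ l - 1)) ^ 2 ≤ c * |q₂ l - 1| := by
        have h1 : (l * γ * (q₂ l - 1)) ^ 2 = (l * γ) ^ 2 * (q₂ l - 1) ^ 2 := by ring
        have h2 : (q₂ l - 1) ^ 2 = |q₂ l - 1| ^ 2 := (sq_abs _).symm
        have h3 : (l * γ) ^ 2 ≤ 4 * γ ^ 2 := by
          nlinarith [mul_nonneg (mul_nonneg (le_of_lt (sub_pos.2 hl2))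
            (by linarith : (0:ℝ) ≤ 2 + l)) (le_of_lt (mul_pos hγ0 hγ0))]
        have h4 : 4 * γ ^ 2 * |q₂ l - 1| ≤ c := by
          have := (le_div_iff₀ (by positivity : (0:ℝ) < 4 * γ ^ 2)).1 hmd2
          linarith
        nlinarith [mul_le_mul_of_nonneg_right h3 (sq_nonneg (q₂ l - 1)),
          mul_le_mul_of_nonneg_right h4 hm0, h2, hm0]
      linarith [hkey, hsq]
    have o2 : (fun l => (l - 1) * (γ * (q₂ l - 1))) =o[𝓝[>] (1:ℝ)] fun l => |q₂ l - 1| := by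
      rw [Asymptotics.isLittleO_iff]
      intro c hc
      have hev : ∀ᶠ l in 𝓝[>] (1:ℝ), |l - 1| < c / γ := by
        have := Metric.tendsto_nhds.1 hidt (c / γ) (by positivity)
        filter_upwards [this] with l hl
        rwa [Real.dist_eq] at hl
      filter_upwards [hev] with l hl
      rw [Real.norm_eq_abs, Real.norm_eq_abs, abs_abs, abs_mul, abs_mul, abs_of_pos hγ0]
      have h1 : |l - 1| * γ < c := (lt_div_iff₀ hγ0).1 hl
      nlinarith [abs_nonneg (q₂ l - 1), abs_nonneg (l - 1),
        mul_le_mul_of_nonneg_right (le_of_lt h1) (abs_nonneg (q₂ l - 1))]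
    have hsum := o1.add o2
    apply hsum.congr' _ EventuallyEq.rfl
    filter_upwards [self_mem_nhdsWithin] with l hl
    rw [← (hsol l hl).2.2.1]
    ring
  exact ⟨⟨hdiff1, hdiff2, hanti1, hanti2, hlim1, hlim2, hlim3, hlim4⟩, ho⟩
end

section
/- Let θ ∈ (0,1), γ_θ = √((1−θ)/θ), α_θ = (θ(1−θ))^{−1/2}, and for λ > 1 define ℓ(λ) = θ(1−q_1(λ)) + (1−θ)(1−q_2(λ)) and ρ(λ) = θ(1−q_1(λ))/ℓ(λ). Then: (i) for each λ > 1, (ℓ(λ), ρ(λ)) is the unique solution in (0,∞)² of the system ρℓ = θ(1 − e^{−α_θ λ (1−ρ) ℓ}), (1−ρ)ℓ = (1−θ)(1 − e^{−α_θ λ ρ ℓ}), and moreover ℓ(λ) ∈ (0,1) and ρ(λ) ∈ (0,1); (ii) λ ↦ ℓ(λ) is differentiable and strictly increasing on (1,∞) with ℓ(λ) → 0 as λ → 1+ and ℓ(λ) → 1 as λ → ∞, hence ℓ is a bijection from (1,∞) to (0,1); (iii) ρ(λ) → (1+γ_θ)^{−1} as λ → 1+. -/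
open Filter Set

set_option maxHeartbeats 2000000

lemma aux_ulog (u : ℝ) (h0 : 0 < u) (h1 : u < 1) : -(u * Real.log u) < 1 - u := by
  have hne : u⁻¹ ≠ 1 := by
    intro h
    rw [inv_eq_one] at h
    linarith
  have h := Real.log_lt_sub_one_of_pos (inv_pos.2 h0) hne
  rw [Real.log_inv] at h
  have h2 := mul_lt_mul_of_pos_left h h0
  have h3 : u * u⁻¹ = 1 := mul_inv_cancel₀ h0.ne'
  nlinarith [h2, h3]

lemma aux_expratio : Filter.Tendsto (fun t : ℝ => (1 - Real.exp (-t)) / t)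
    (nhdsWithin 0 {(0:ℝ)}ᶜ) (nhds 1) := by
  have h : HasDerivAt (fun t : ℝ => 1 - Real.exp (-t)) 1 0 := by
    have h1 : HasDerivAt (fun t : ℝ => -t) (-1) 0 := (hasDerivAt_id (0:ℝ)).neg
    have h2 := h1.exp
    have h3 := h2.const_sub 1
    simpa using h3
  have h2 := hasDerivAt_iff_tendsto_slope.1 h
  refine h2.congr' ?_
  filter_upwards [self_mem_nhdsWithin] with t ht
  rw [slope_def_field]
  simp [Real.exp_zero]

theorem implicit_diff_aux {g : ℝ × ℝ → ℝ} {p₀ : ℝ × ℝ} {D : ℝ × ℝ →L[ℝ] ℝ} {q : ℝ → ℝ}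
    (hg : HasStrictFDerivAt g D p₀) (hD : D (0, 1) ≠ 0)
    (hq : ∀ᶠ p : ℝ × ℝ in nhds p₀, g p = 0 → p.2 = q p.1)
    (hg0 : g p₀ = 0) :
    DifferentiableAt ℝ q p₀.1 := by
  have hDapp : ∀ a b : ℝ, D (a, b) = a * D (1, 0) + b * D (0, 1) := by
    intro a b
    have h : ((a, b) : ℝ × ℝ) = a • ((1:ℝ), (0:ℝ)) + b • ((0:ℝ), (1:ℝ)) := by
      simp [Prod.ext_iff]
    rw [h, map_add, map_smul, map_smul, smul_eq_mul, smul_eq_mul]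
  set c₁ := D (1, 0) with hc₁
  set c₂ := D (0, 1) with hc₂
  set f := (ContinuousLinearMap.fst ℝ ℝ ℝ).prod D with hf
  set Binv := (ContinuousLinearMap.fst ℝ ℝ ℝ).prod
    (c₂⁻¹ • (ContinuousLinearMap.snd ℝ ℝ ℝ - c₁ • ContinuousLinearMap.fst ℝ ℝ ℝ)) with hBinv
  have h1 : ∀ p : ℝ × ℝ, Binv (f p) = p := by
    rintro ⟨a, b⟩
    simp only [hf, hBinv, ContinuousLinearMap.prod_apply, ContinuousLinearMap.coe_fst',
      ContinuousLinearMap.smul_apply, ContinuousLinearMap.sub_apply,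
      ContinuousLinearMap.coe_snd', hDapp a b, smul_eq_mul]
    refine Prod.ext rfl ?_
    simp only
    field_simp
    ring
  have h2 : ∀ p : ℝ × ℝ, f (Binv p) = p := by
    rintro ⟨u, v⟩
    simp only [hf, hBinv, ContinuousLinearMap.prod_apply, ContinuousLinearMap.coe_fst',
      ContinuousLinearMap.smul_apply, ContinuousLinearMap.sub_apply,
      ContinuousLinearMap.coe_snd', smul_eq_mul]
    refine Prod.ext rfl ?_
    simp only [hDapp]
    field_simp
    ring
  set A := ContinuousLinearEquiv.equivOfInverse f Binv h1 h2 with hA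
  have hΦ : HasStrictFDerivAt (fun p : ℝ × ℝ => (p.1, g p)) (A : (ℝ × ℝ) →L[ℝ] (ℝ × ℝ)) p₀ :=
    hasStrictFDerivAt_fst.prodMk hg
  have hΦ0 : (p₀.1, g p₀) = (p₀.1, (0:ℝ)) := by rw [hg0]
  set Ψ := hΦ.localInverse _ _ _ with hΨ
  have hder : HasStrictFDerivAt Ψ ((A.symm : (ℝ × ℝ) →L[ℝ] (ℝ × ℝ))) (p₀.1, 0) := by
    have := hΦ.to_localInverse
    rwa [hg0] at this
  have hj : Tendsto (fun lam : ℝ => ((lam, (0:ℝ)) : ℝ × ℝ)) (nhds p₀.1) (nhds (p₀.1, 0)) :=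
    (continuous_id.prodMk continuous_const).tendsto _
  have hrinv : ∀ᶠ y in nhds ((p₀.1, 0) : ℝ × ℝ), (fun p : ℝ × ℝ => (p.1, g p)) (Ψ y) = y := by
    have := hΦ.eventually_right_inverse
    rwa [hg0] at this
  have hΨtend : Tendsto Ψ (nhds ((p₀.1, 0) : ℝ × ℝ)) (nhds p₀) := by
    have := hΦ.localInverse_tendsto
    rwa [hg0] at this
  have hmem : ∀ᶠ y in nhds ((p₀.1, 0) : ℝ × ℝ), g (Ψ y) = 0 → (Ψ y).2 = q (Ψ y).1 :=
    hΨtend.eventually hq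
  have hEq : ∀ᶠ lam in nhds p₀.1, q lam = (Ψ (lam, 0)).2 := by
    filter_upwards [hj.eventually hrinv, hj.eventually hmem] with lam ha hb
    have hfst : (Ψ (lam, 0)).1 = lam := congrArg Prod.fst ha
    have hsnd : g (Ψ (lam, 0)) = 0 := congrArg Prod.snd ha
    have := hb hsnd
    rw [hfst] at this
    exact this.symm
  have hdiff : DifferentiableAt ℝ (fun lam : ℝ => (Ψ (lam, 0)).2) p₀.1 := by
    have h1' : DifferentiableAt ℝ Ψ ((p₀.1, 0) : ℝ × ℝ) := hder.differentiableAt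
    have h2' : DifferentiableAt ℝ (fun lam : ℝ => ((lam, (0:ℝ)) : ℝ × ℝ)) p₀.1 :=
      differentiableAt_id.prodMk (differentiableAt_const 0)
    exact (h1'.comp p₀.1 h2').snd
  exact hdiff.congr_of_eventuallyEq hEq

/-- Lemma `lem: solv`: with `γ_θ = √((1−θ)/θ)`, `α_θ = (θ(1−θ))^{−1/2}`,
`(q₁(λ), q₂(λ))` the unique solution in `(0,1)²` of the fixed-point system, and
`ℓ(λ) = θ(1−q₁(λ)) + (1−θ)(1−q₂(λ))`, `ρ(λ) = θ(1−q₁(λ))/ℓ(λ)`: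
(i) for each `λ > 1`, `(ℓ(λ), ρ(λ))` is the unique solution in `(0,∞)²` of the system
`ρℓ = θ(1 − e^{−α_θ λ (1−ρ)ℓ})`, `(1−ρ)ℓ = (1−θ)(1 − e^{−α_θ λ ρ ℓ})`, and
`ℓ(λ), ρ(λ) ∈ (0,1)`; (ii) `ℓ` is differentiable and strictly increasing on `(1,∞)` with
`ℓ(1+) = 0` and `ℓ(∞) = 1`, hence a bijection from `(1,∞)` to `(0,1)`;
(iii) `ρ(λ) → (1+γ_θ)⁻¹` as `λ → 1+`. -/
theorem statement_8 (θ : ℝ) (hθ : θ ∈ Set.Ioo (0:ℝ) 1)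
    (γ α : ℝ) (hγ : γ = Real.sqrt ((1 - θ) / θ)) (hα : α = 1 / Real.sqrt (θ * (1 - θ)))
    (q₁ q₂ : ℝ → ℝ)
    (hsol : ∀ lam, 1 < lam →
      q₁ lam ∈ Set.Ioo (0:ℝ) 1 ∧ q₂ lam ∈ Set.Ioo (0:ℝ) 1 ∧
      q₁ lam = Real.exp (lam * γ * (q₂ lam - 1)) ∧
      q₂ lam = Real.exp (lam * γ⁻¹ * (q₁ lam - 1)))
    (huniq : ∀ lam, 1 < lam → ∀ x y : ℝ, x ∈ Set.Ioo (0:ℝ) 1 → y ∈ Set.Ioo (0:ℝ) 1 →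
      x = Real.exp (lam * γ * (y - 1)) → y = Real.exp (lam * γ⁻¹ * (x - 1)) →
      x = q₁ lam ∧ y = q₂ lam)
    (ℓ ρ : ℝ → ℝ)
    (hℓ : ∀ lam, ℓ lam = θ * (1 - q₁ lam) + (1 - θ) * (1 - q₂ lam))
    (hρ : ∀ lam, ρ lam = θ * (1 - q₁ lam) / ℓ lam) :
    -- (i)
    (∀ lam, 1 < lam →
      (ρ lam * ℓ lam = θ * (1 - Real.exp (-(α * lam * (1 - ρ lam) * ℓ lam))) ∧
       (1 - ρ lam) * ℓ lam = (1 - θ) * (1 - Real.exp (-(α * lam * ρ lam * ℓ lam)))) ∧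
      (∀ l r : ℝ, 0 < l → 0 < r →
        r * l = θ * (1 - Real.exp (-(α * lam * (1 - r) * l))) →
        (1 - r) * l = (1 - θ) * (1 - Real.exp (-(α * lam * r * l))) →
        l = ℓ lam ∧ r = ρ lam) ∧
      ℓ lam ∈ Set.Ioo (0:ℝ) 1 ∧ ρ lam ∈ Set.Ioo (0:ℝ) 1) ∧
    -- (ii)
    ((∀ lam ∈ Set.Ioi (1:ℝ), DifferentiableAt ℝ ℓ lam) ∧
     StrictMonoOn ℓ (Set.Ioi 1) ∧
     Tendsto ℓ (nhdsWithin 1 (Set.Ioi 1)) (nhds 0) ∧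
     Tendsto ℓ atTop (nhds 1) ∧
     Set.BijOn ℓ (Set.Ioi 1) (Set.Ioo 0 1)) ∧
    -- (iii)
    Tendsto ρ (nhdsWithin 1 (Set.Ioi 1)) (nhds (1 + γ)⁻¹) := by
  obtain ⟨hθ0, hθ1⟩ := hθ
  have h1θ : (0:ℝ) < 1 - θ := by linarith
  have hγpos : 0 < γ := by rw [hγ]; exact Real.sqrt_pos.2 (div_pos h1θ hθ0)
  have hs0 : 0 < Real.sqrt (θ * (1 - θ)) := Real.sqrt_pos.2 (by nlinarith)
  have hs2 : Real.sqrt (θ * (1 - θ)) ^ 2 = θ * (1 - θ) := Real.sq_sqrt (by nlinarith)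
  have hαpos : 0 < α := by rw [hα]; exact div_pos one_pos hs0
  have hγs : γ * Real.sqrt (θ * (1 - θ)) = 1 - θ := by
    rw [hγ, ← Real.sqrt_mul (le_of_lt (div_pos h1θ hθ0))]
    rw [show (1 - θ) / θ * (θ * (1 - θ)) = (1 - θ) ^ 2 by field_simp]
    exact Real.sqrt_sq h1θ.le
  have hαθγ : α * (1 - θ) = γ := by
    rw [hα, div_mul_eq_mul_div, one_mul, div_eq_iff hs0.ne']; linarith [hγs]
  have hγinv : γ⁻¹ = α * θ := by
    have h : γ * (α * θ) = 1 := by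
      rw [hα, show γ * (1 / Real.sqrt (θ * (1 - θ)) * θ) = γ * θ / Real.sqrt (θ * (1 - θ)) by ring,
        div_eq_one_iff_eq hs0.ne']
      nlinarith [hγs, hs2, hs0]
    exact (eq_inv_of_mul_eq_one_right h).symm
  -- basic per-lambda facts
  have hl01 : ∀ lam, 1 < lam → ℓ lam ∈ Set.Ioo (0:ℝ) 1 := by
    intro lam hlam
    obtain ⟨⟨hx0, hx1⟩, ⟨hy0, hy1⟩, -, -⟩ := hsol lam hlam
    constructor
    · rw [hℓ]; nlinarith
    · rw [hℓ]; nlinarith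
  have hρl : ∀ lam, 1 < lam → ρ lam * ℓ lam = θ * (1 - q₁ lam) := by
    intro lam hlam
    rw [hρ, div_mul_cancel₀ _ (hl01 lam hlam).1.ne']
  have hρl' : ∀ lam, 1 < lam → (1 - ρ lam) * ℓ lam = (1 - θ) * (1 - q₂ lam) := by
    intro lam hlam
    have h1 := hρl lam hlam
    have h2 := hℓ lam
    nlinarith [h1, h2]
  have hρ01 : ∀ lam, 1 < lam → ρ lam ∈ Set.Ioo (0:ℝ) 1 := by
    intro lam hlam
    obtain ⟨⟨hx0, hx1⟩, ⟨hy0, hy1⟩, -, -⟩ := hsol lam hlam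
    have hl0 := (hl01 lam hlam).1
    constructor
    · rw [hρ]; exact div_pos (by nlinarith) hl0
    · rw [hρ, div_lt_one hl0, hℓ]; nlinarith
  have parti : ∀ lam, 1 < lam →
      (ρ lam * ℓ lam = θ * (1 - Real.exp (-(α * lam * (1 - ρ lam) * ℓ lam))) ∧
       (1 - ρ lam) * ℓ lam = (1 - θ) * (1 - Real.exp (-(α * lam * ρ lam * ℓ lam)))) ∧
      (∀ l r : ℝ, 0 < l → 0 < r →
        r * l = θ * (1 - Real.exp (-(α * lam * (1 - r) * l))) →
        (1 - r) * l = (1 - θ) * (1 - Real.exp (-(α * lam * r * l))) →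
        l = ℓ lam ∧ r = ρ lam) ∧
      ℓ lam ∈ Set.Ioo (0:ℝ) 1 ∧ ρ lam ∈ Set.Ioo (0:ℝ) 1 := by
    intro lam hlam
    obtain ⟨⟨hx0, hx1⟩, ⟨hy0, hy1⟩, he1, he2⟩ := hsol lam hlam
    have hl0 := (hl01 lam hlam).1
    refine ⟨⟨?_, ?_⟩, ?_, hl01 lam hlam, hρ01 lam hlam⟩
    · rw [show -(α * lam * (1 - ρ lam) * ℓ lam) = lam * γ * (q₂ lam - 1) by
        linear_combination (-(α * lam)) * hρl' lam hlam - lam * (1 - q₂ lam) * hαθγ]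
      rw [← he1]
      exact hρl lam hlam
    · rw [show -(α * lam * ρ lam * ℓ lam) = lam * γ⁻¹ * (q₁ lam - 1) by
        linear_combination (-(α * lam)) * hρl lam hlam + lam * (1 - q₁ lam) * hγinv]
      rw [← he2]
      exact hρl' lam hlam
    · intro l r hl hr heq1 heq2
      have hlam0 : (0:ℝ) < lam := by linarith
      have hr1 : r < 1 := by
        by_contra hcon
        push_neg at hcon
        have h1 : (1:ℝ) ≤ Real.exp (-(α * lam * (1 - r) * l)) := by
          rw [Real.one_le_exp_iff]
          nlinarith [mul_nonneg (mul_pos (mul_pos hαpos hlam0) hl).le (by linarith : (0:ℝ) ≤ r - 1)]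
        nlinarith [mul_pos hr hl, mul_nonneg hθ0.le (by linarith : (0:ℝ) ≤ Real.exp (-(α * lam * (1 - r) * l)) - 1)]
      have hx0' : (0:ℝ) < Real.exp (-(α * lam * (1 - r) * l)) := Real.exp_pos _
      have hx1' : Real.exp (-(α * lam * (1 - r) * l)) < 1 := by
        rw [Real.exp_lt_one_iff]
        have := mul_pos (mul_pos (mul_pos hαpos hlam0) (by linarith : (0:ℝ) < 1 - r)) hl
        linarith
      have hy0' : (0:ℝ) < Real.exp (-(α * lam * r * l)) := Real.exp_pos _
      have hy1' : Real.exp (-(α * lam * r * l)) < 1 := by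
        rw [Real.exp_lt_one_iff]
        have := mul_pos (mul_pos (mul_pos hαpos hlam0) hr) hl
        linarith
      set x := Real.exp (-(α * lam * (1 - r) * l)) with hxdef
      set y := Real.exp (-(α * lam * r * l)) with hydef
      have hxeq : x = Real.exp (lam * γ * (y - 1)) := by
        rw [hxdef, show lam * γ * (y - 1) = -(α * lam * (1 - r) * l) by
          linear_combination (α * lam) * heq2 + lam * (1 - y) * hαθγ]
      have hyeq : y = Real.exp (lam * γ⁻¹ * (x - 1)) := by
        rw [hydef, show lam * γ⁻¹ * (x - 1) = -(α * lam * r * l) by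
          linear_combination (α * lam) * heq1 - lam * (1 - x) * hγinv]
      clear_value x y
      obtain ⟨hxq, hyq⟩ := huniq lam hlam x y ⟨hx0', hx1'⟩ ⟨hy0', hy1'⟩ hxeq hyeq
      have h1 : r * l = ρ lam * ℓ lam := by
        rw [hρl lam hlam, ← hxq]; linarith [heq1]
      have h2 : (1 - r) * l = (1 - ρ lam) * ℓ lam := by
        rw [hρl' lam hlam, ← hyq]; linarith [heq2]
      have hleq : l = ℓ lam := by linarith [h1, h2]
      refine ⟨hleq, ?_⟩
      have := h1
      rw [hleq] at this
      exact mul_right_cancel₀ hl0.ne' this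
  have hγi : 0 < γ⁻¹ := inv_pos.2 hγpos
  -- fixed point characterization
  have hfix : ∀ lam, 1 < lam → ∀ x : ℝ, 0 < x → x < 1 →
      (Real.exp (lam * γ * (Real.exp (lam * γ⁻¹ * (x - 1)) - 1)) = x ↔ x = q₁ lam) := by
    intro lam hlam x hx0 hx1
    constructor
    · intro h
      have hy1 : Real.exp (lam * γ⁻¹ * (x - 1)) < 1 := by
        rw [Real.exp_lt_one_iff]
        have : 0 < lam * γ⁻¹ := by positivity
        nlinarith
      exact (huniq lam hlam x _ ⟨hx0, hx1⟩ ⟨Real.exp_pos _, hy1⟩ h.symm rfl).1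
    · intro h
      subst h
      obtain ⟨-, -, he1, he2⟩ := hsol lam hlam
      rw [← he2, ← he1]
  -- H := G - id, continuity, value at 1, derivative at 1
  have hzero : ∀ lam, 1 < lam → ∀ x : ℝ, 0 < x → x < 1 →
      Real.exp (lam * γ * (Real.exp (lam * γ⁻¹ * (x - 1)) - 1)) - x = 0 → x = q₁ lam := by
    intro lam hlam x hx0 hx1 h
    exact (hfix lam hlam x hx0 hx1).1 (by linarith [h])
  have hsigngt : ∀ lam, 1 < lam → ∀ x : ℝ, 0 < x → x < q₁ lam →
      x < Real.exp (lam * γ * (Real.exp (lam * γ⁻¹ * (x - 1)) - 1)) := by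
    intro lam hlam c hc0 hcq
    obtain ⟨⟨hq0, hq1⟩, -, -, -⟩ := hsol lam hlam
    have hc1 : c < 1 := by linarith
    by_contra hcon
    push_neg at hcon
    rcases eq_or_lt_of_le hcon with heq | hlt
    · exact absurd ((hfix lam hlam c hc0 hc1).1 heq) (by intro h; rw [h] at hcq; exact lt_irrefl _ hcq)
    · set H : ℝ → ℝ := fun x => Real.exp (lam * γ * (Real.exp (lam * γ⁻¹ * (x - 1)) - 1)) - x with hH
      have hHcont : ContinuousOn H (Set.Icc 0 c) := by fun_prop
      have hH0 : 0 < H 0 := by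
        simp only [hH]
        have := Real.exp_pos (lam * γ * (Real.exp (lam * γ⁻¹ * ((0:ℝ) - 1)) - 1))
        simpa using this
      have hHc : H c < 0 := by simp only [hH]; linarith
      have : (0:ℝ) ∈ Set.Ioo (H c) (H 0) := ⟨hHc, hH0⟩
      obtain ⟨d, hd, hd0⟩ := intermediate_value_Ioo' hc0.le hHcont this
      have hdq : d = q₁ lam := hzero lam hlam d hd.1 (by linarith [hd.2]) hd0
      rw [hdq] at hd
      linarith [hd.2]
  -- derivative of H at 1 is lam^2 - 1
  have hderiv : ∀ lam : ℝ, 1 < lam → HasDerivAt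
      (fun x : ℝ => Real.exp (lam * γ * (Real.exp (lam * γ⁻¹ * (x - 1)) - 1)) - x) (lam^2 - 1) 1 := by
    intro lam hlam
    have h1 : HasDerivAt (fun x : ℝ => lam * γ⁻¹ * (x - 1)) (lam * γ⁻¹) 1 := by
      simpa using ((hasDerivAt_id (1:ℝ)).sub_const 1).const_mul (lam * γ⁻¹)
    have h2 := h1.exp
    have h3 := (h2.sub_const 1).const_mul (lam * γ)
    have h4 := h3.exp
    have h5 := h4.sub (hasDerivAt_id 1)
    convert h5 using 1
    · rfl
    · rfl
    · rfl
    have hgg : γ * γ⁻¹ = 1 := mul_inv_cancel₀ hγpos.ne'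
    simp only [sub_self, mul_zero, zero_mul, Real.exp_zero, id_eq]
    nlinarith [hgg]
  have hsignlt : ∀ lam, 1 < lam → ∀ x : ℝ, q₁ lam < x → x < 1 →
      Real.exp (lam * γ * (Real.exp (lam * γ⁻¹ * (x - 1)) - 1)) < x := by
    intro lam hlam c hqc hc1
    obtain ⟨⟨hq0, hq1⟩, -, -, -⟩ := hsol lam hlam
    have hc0 : 0 < c := by linarith
    set H : ℝ → ℝ := fun x => Real.exp (lam * γ * (Real.exp (lam * γ⁻¹ * (x - 1)) - 1)) - x with hH
    have hH1 : H 1 = 0 := by simp [hH]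
    have hslope := hasDerivAt_iff_tendsto_slope.1 (hderiv lam hlam)
    have hslope' : Tendsto (slope H 1) (nhdsWithin 1 (Set.Iio 1)) (nhds (lam^2 - 1)) :=
      hslope.mono_left (nhdsWithin_mono 1 (fun y hy => ne_of_lt hy))
    have hpos : (0:ℝ) < lam^2 - 1 := by nlinarith
    have hev1 : ∀ᶠ x in nhdsWithin 1 (Set.Iio 1), 0 < slope H 1 x :=
      hslope'.eventually (lt_mem_nhds hpos)
    have hev2 : ∀ᶠ x in nhdsWithin 1 (Set.Iio 1), c < x :=
      (eventually_gt_nhds hc1).filter_mono nhdsWithin_le_nhds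
    obtain ⟨x₀, ⟨hx₀s, hx₀c⟩, hx₀1⟩ := ((hev1.and hev2).and self_mem_nhdsWithin).exists
    have hx₀1' : x₀ < 1 := hx₀1
    have hHx₀ : H x₀ < 0 := by
      rw [slope_def_field, hH1, sub_zero] at hx₀s
      rcases div_pos_iff.1 hx₀s with ⟨h, h'⟩ | ⟨h, h'⟩
      · linarith
      · linarith
    by_contra hcon
    push_neg at hcon
    have hHc : 0 ≤ H c := by simp only [hH]; linarith
    rcases eq_or_lt_of_le hHc with heq | hlt
    · have := hzero lam hlam c hc0 hc1 heq.symm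
      rw [this] at hqc; exact lt_irrefl _ hqc
    · have hHcont : ContinuousOn H (Set.Icc c x₀) := by fun_prop
      have : (0:ℝ) ∈ Set.Ioo (H x₀) (H c) := ⟨hHx₀, hlt⟩
      obtain ⟨d, hd, hd0⟩ := intermediate_value_Ioo' hx₀c.le hHcont this
      have hdq : d = q₁ lam := hzero lam hlam d (by linarith [hd.1]) (by linarith [hd.2]) hd0
      rw [hdq] at hd
      linarith [hd.1]
  -- q1 strictly decreasing
  have hq₁lt : ∀ lam lam' : ℝ, 1 < lam → lam < lam' → q₁ lam' < q₁ lam := by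
    intro lam lam' hlam hll
    have hlam' : 1 < lam' := by linarith
    obtain ⟨⟨hx0, hx1⟩, ⟨hy0, hy1⟩, he1, he2⟩ := hsol lam hlam
    set x := q₁ lam with hxd
    have ha'a : Real.exp (lam' * γ⁻¹ * (x - 1)) < Real.exp (lam * γ⁻¹ * (x - 1)) := by
      rw [Real.exp_lt_exp]
      nlinarith [mul_pos (mul_pos (show (0:ℝ) < lam' - lam by linarith) hγi)
        (show (0:ℝ) < 1 - x by linarith)]
    have ha1 : Real.exp (lam * γ⁻¹ * (x - 1)) < 1 := by
      rw [Real.exp_lt_one_iff]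
      nlinarith [mul_pos (mul_pos (show (0:ℝ) < lam by linarith) hγi)
        (show (0:ℝ) < 1 - x by linarith)]
    have hGlt : Real.exp (lam' * γ * (Real.exp (lam' * γ⁻¹ * (x - 1)) - 1)) < x := by
      have hexpo : lam' * γ * (Real.exp (lam' * γ⁻¹ * (x - 1)) - 1)
          < lam * γ * (Real.exp (lam * γ⁻¹ * (x - 1)) - 1) := by
        have s1 : lam' * γ * (Real.exp (lam' * γ⁻¹ * (x - 1)) - 1)
            < lam' * γ * (Real.exp (lam * γ⁻¹ * (x - 1)) - 1) :=
          mul_lt_mul_of_pos_left (by linarith) (mul_pos (by linarith) hγpos)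
        have s2 : lam' * γ * (Real.exp (lam * γ⁻¹ * (x - 1)) - 1)
            < lam * γ * (Real.exp (lam * γ⁻¹ * (x - 1)) - 1) :=
          mul_lt_mul_of_neg_right (by nlinarith) (by linarith)
        linarith
      calc Real.exp (lam' * γ * (Real.exp (lam' * γ⁻¹ * (x - 1)) - 1))
          < Real.exp (lam * γ * (Real.exp (lam * γ⁻¹ * (x - 1)) - 1)) := Real.exp_lt_exp.2 hexpo
        _ = x := by rw [← he2, ← he1]
    rcases lt_trichotomy (q₁ lam') x with h | h | h
    · exact h
    · exfalso
      have := (hfix lam' hlam' x hx0 hx1).2 h.symm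
      rw [this] at hGlt
      exact lt_irrefl _ hGlt
    · exfalso
      have := hsigngt lam' hlam' x hx0 h
      linarith
  have hq₂lt : ∀ lam lam' : ℝ, 1 < lam → lam < lam' → q₂ lam' < q₂ lam := by
    intro lam lam' hlam hll
    have hlam' : 1 < lam' := by linarith
    obtain ⟨⟨hx0, hx1⟩, ⟨hy0, hy1⟩, he1, he2⟩ := hsol lam hlam
    obtain ⟨⟨hx0', hx1'⟩, ⟨hy0', hy1'⟩, he1', he2'⟩ := hsol lam' hlam'
    rw [he2, he2']
    rw [Real.exp_lt_exp]
    have hq := hq₁lt lam lam' hlam hll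
    have s1 : lam' * γ⁻¹ * (q₁ lam' - 1) < lam' * γ⁻¹ * (q₁ lam - 1) :=
      mul_lt_mul_of_pos_left (by linarith) (mul_pos (by linarith) hγi)
    have s2 : lam' * γ⁻¹ * (q₁ lam - 1) < lam * γ⁻¹ * (q₁ lam - 1) :=
      mul_lt_mul_of_neg_right (by nlinarith) (by linarith)
    linarith
  -- limits at infinity
  have hq₁top : Tendsto q₁ atTop (nhds 0) := by
    rw [tendsto_order]
    constructor
    · intro b hb
      filter_upwards [eventually_gt_atTop (1:ℝ)] with lam hlam
      have := (hsol lam hlam).1.1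
      linarith
    · intro b hb
      rcases le_or_gt 1 b with hb1 | hb1
      · filter_upwards [eventually_gt_atTop (1:ℝ)] with lam hlam
        have := (hsol lam hlam).1.2
        linarith
      · -- b ∈ (0,1): eventually G lam b < b
        have hinner : Tendsto (fun lam : ℝ => lam * γ⁻¹ * (b - 1)) atTop atBot := by
          have hC : γ⁻¹ * (b - 1) < 0 := by nlinarith [mul_pos hγi (show (0:ℝ) < 1 - b by linarith)]
          exact (tendsto_id.atTop_mul_neg hC tendsto_const_nhds).congr
            (fun x => by simp only [id_eq]; ring)
        have houter : Tendsto (fun lam : ℝ => lam * γ * (Real.exp (lam * γ⁻¹ * (b - 1)) - 1)) atTop atBot := by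
          have h1 : Tendsto (fun lam : ℝ => lam * γ) atTop atTop :=
            tendsto_id.atTop_mul_const hγpos
          have h2 : Tendsto (fun lam : ℝ => Real.exp (lam * γ⁻¹ * (b - 1)) - 1) atTop (nhds (0 - 1)) :=
            (Real.tendsto_exp_atBot.comp hinner).sub_const 1
          have := h1.atTop_mul_neg (by norm_num : (0:ℝ) - 1 < 0) h2
          exact this
        have hGtend : Tendsto (fun lam : ℝ => Real.exp (lam * γ * (Real.exp (lam * γ⁻¹ * (b - 1)) - 1))) atTop (nhds 0) :=
          Real.tendsto_exp_atBot.comp houter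
        have hev : ∀ᶠ lam : ℝ in atTop, Real.exp (lam * γ * (Real.exp (lam * γ⁻¹ * (b - 1)) - 1)) < b :=
          hGtend.eventually (eventually_lt_nhds hb)
        filter_upwards [hev, eventually_gt_atTop (1:ℝ)] with lam hG hlam
        by_contra hcon
        push_neg at hcon
        rcases eq_or_lt_of_le hcon with heq | hlt
        · have := (hfix lam hlam b hb (by linarith)).2 heq
          linarith
        · have := hsigngt lam hlam b hb hlt
          linarith
  have hq₂top : Tendsto q₂ atTop (nhds 0) := by
    have hexpo : Tendsto (fun lam : ℝ => lam * γ⁻¹ * (q₁ lam - 1)) atTop atBot := by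
      have h1 : Tendsto (fun lam : ℝ => lam * γ⁻¹) atTop atTop := tendsto_id.atTop_mul_const hγi
      have h2 : Tendsto (fun lam : ℝ => q₁ lam - 1) atTop (nhds (0 - 1)) := hq₁top.sub_const 1
      exact h1.atTop_mul_neg (by norm_num : (0:ℝ) - 1 < 0) h2
    have h3 : Tendsto (fun lam : ℝ => Real.exp (lam * γ⁻¹ * (q₁ lam - 1))) atTop (nhds 0) :=
      Real.tendsto_exp_atBot.comp hexpo
    refine h3.congr' ?_
    filter_upwards [eventually_gt_atTop (1:ℝ)] with lam hlam
    exact ((hsol lam hlam).2.2.2).symm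
  have hq₁one : Tendsto q₁ (nhdsWithin 1 (Set.Ioi 1)) (nhds 1) := by
    rw [tendsto_order]
    constructor
    · intro b hb
      rcases le_or_gt b 0 with hb0 | hb0
      · filter_upwards [self_mem_nhdsWithin] with lam hlam
        have := (hsol lam hlam).1.1
        linarith
      · have hb1 : b < 1 := hb
        have hcont : ContinuousAt
            (fun lam : ℝ => Real.exp (lam * γ * (Real.exp (lam * γ⁻¹ * (b - 1)) - 1))) 1 := by
          fun_prop
        have hval : b < Real.exp (1 * γ * (Real.exp (1 * γ⁻¹ * (b - 1)) - 1)) := by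
          have ht0 : γ⁻¹ * (b - 1) ≠ 0 := by
            have : γ⁻¹ * (b - 1) < 0 := mul_neg_of_pos_of_neg hγi (by linarith)
            exact ne_of_lt this
          have h1 : γ⁻¹ * (b - 1) + 1 < Real.exp (γ⁻¹ * (b - 1)) := Real.add_one_lt_exp ht0
          have h2 : b - 1 < 1 * γ * (Real.exp (1 * γ⁻¹ * (b - 1)) - 1) := by
            rw [one_mul, one_mul]
            have h3 : γ * (γ⁻¹ * (b - 1)) < γ * (Real.exp (γ⁻¹ * (b - 1)) - 1) :=
              mul_lt_mul_of_pos_left (by linarith) hγpos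
            have h4 : γ * (γ⁻¹ * (b - 1)) = b - 1 := by
              rw [← mul_assoc, mul_inv_cancel₀ hγpos.ne', one_mul]
            linarith
          have h5 : b < Real.exp (b - 1) := by
            have := Real.add_one_lt_exp (show b - 1 ≠ 0 by intro h; apply absurd (by linarith : b = 1); linarith)
            linarith
          calc b < Real.exp (b - 1) := h5
            _ < Real.exp (1 * γ * (Real.exp (1 * γ⁻¹ * (b - 1)) - 1)) := Real.exp_lt_exp.2 h2
        have hev : ∀ᶠ lam in nhdsWithin 1 (Set.Ioi 1),
            b < Real.exp (lam * γ * (Real.exp (lam * γ⁻¹ * (b - 1)) - 1)) :=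
          (hcont.eventually (eventually_gt_nhds hval)).filter_mono nhdsWithin_le_nhds
        filter_upwards [hev, self_mem_nhdsWithin] with lam hG hlam
        by_contra hcon
        push_neg at hcon
        rcases eq_or_lt_of_le hcon with heq | hlt
        · have := (hfix lam hlam b hb0 hb1).2 heq.symm
          linarith
        · have := hsignlt lam hlam b hlt hb1
          linarith
    · intro b hb
      filter_upwards [self_mem_nhdsWithin] with lam hlam
      have := (hsol lam hlam).1.2
      linarith
  have hq₂one : Tendsto q₂ (nhdsWithin 1 (Set.Ioi 1)) (nhds 1) := by
    have tid : Tendsto (fun lam : ℝ => lam) (nhdsWithin 1 (Set.Ioi 1)) (nhds 1) :=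
      tendsto_id.mono_left nhdsWithin_le_nhds
    have hexpo : Tendsto (fun lam : ℝ => lam * γ⁻¹ * (q₁ lam - 1)) (nhdsWithin 1 (Set.Ioi 1)) (nhds 0) := by
      have := ((tid.mul_const γ⁻¹).mul (hq₁one.sub_const 1))
      simpa using this
    have h1 : Tendsto (fun lam : ℝ => Real.exp (lam * γ⁻¹ * (q₁ lam - 1))) (nhdsWithin 1 (Set.Ioi 1)) (nhds 1) := by
      have := (Real.continuous_exp.tendsto 0).comp hexpo
      simpa [Function.comp_def] using this
    refine h1.congr' ?_
    filter_upwards [self_mem_nhdsWithin] with lam hlam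
    exact ((hsol lam hlam).2.2.2).symm
  have hgg : γ * γ⁻¹ = 1 := mul_inv_cancel₀ hγpos.ne'
  have hkey : ∀ lam, 1 < lam → lam ^ 2 * q₁ lam * q₂ lam < 1 := by
    intro lam hlam
    obtain ⟨⟨hx0, hx1⟩, ⟨hy0, hy1⟩, he1, he2⟩ := hsol lam hlam
    have hlx : Real.log (q₁ lam) = lam * γ * (q₂ lam - 1) := by rw [he1, Real.log_exp]
    have hly : Real.log (q₂ lam) = lam * γ⁻¹ * (q₁ lam - 1) := by rw [he2, Real.log_exp]
    have hu1 := aux_ulog (q₁ lam) hx0 hx1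
    have hu2 := aux_ulog (q₂ lam) hy0 hy1
    have ha : 0 < -(q₁ lam * Real.log (q₁ lam)) := by
      rw [hlx]
      nlinarith [mul_pos (mul_pos (mul_pos hx0 (show (0:ℝ) < lam by linarith)) hγpos)
        (show (0:ℝ) < 1 - q₂ lam by linarith)]
    have hb : 0 < -(q₂ lam * Real.log (q₂ lam)) := by
      rw [hly]
      nlinarith [mul_pos (mul_pos (mul_pos hy0 (show (0:ℝ) < lam by linarith)) hγi)
        (show (0:ℝ) < 1 - q₁ lam by linarith)]
    have hprod : (-(q₁ lam * Real.log (q₁ lam))) * (-(q₂ lam * Real.log (q₂ lam)))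
        = lam ^ 2 * q₁ lam * q₂ lam * ((1 - q₁ lam) * (1 - q₂ lam)) := by
      rw [hlx, hly]
      linear_combination (lam ^ 2 * q₁ lam * q₂ lam * (1 - q₁ lam) * (1 - q₂ lam)) * hgg
    have hlt : (-(q₁ lam * Real.log (q₁ lam))) * (-(q₂ lam * Real.log (q₂ lam)))
        < (1 - q₁ lam) * (1 - q₂ lam) := mul_lt_mul'' hu1 hu2 ha.le hb.le
    rw [hprod] at hlt
    have hAB : 0 < (1 - q₁ lam) * (1 - q₂ lam) :=
      mul_pos (by linarith) (by linarith)
    exact (mul_lt_iff_lt_one_left hAB).1 hlt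
  have hdiffq₁ : ∀ lam₀, 1 < lam₀ → DifferentiableAt ℝ q₁ lam₀ := by
    intro lam₀ hl₀
    obtain ⟨⟨hx0, hx1⟩, ⟨hy0, hy1⟩, he1, he2⟩ := hsol lam₀ hl₀
    have hfst : HasStrictFDerivAt (fun p : ℝ × ℝ => p.1) (ContinuousLinearMap.fst ℝ ℝ ℝ)
      ((lam₀, q₁ lam₀) : ℝ × ℝ) := hasStrictFDerivAt_fst
    have hsnd : HasStrictFDerivAt (fun p : ℝ × ℝ => p.2) (ContinuousLinearMap.snd ℝ ℝ ℝ)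
      ((lam₀, q₁ lam₀) : ℝ × ℝ) := hasStrictFDerivAt_snd
    have hi := (hfst.mul_const γ⁻¹).mul (hsnd.sub_const (1:ℝ))
    have hee := hi.exp
    have hm := (hfst.mul_const γ).mul (hee.sub_const (1:ℝ))
    have hGd := hm.exp
    have hg := hGd.sub hsnd
    have := implicit_diff_aux (q := q₁) hg ?_ ?_ ?_
    · exact this
    · -- D (0,1) ≠ 0
      simp only [ContinuousLinearMap.coe_sub', Pi.sub_apply, ContinuousLinearMap.smul_apply,
        ContinuousLinearMap.add_apply, ContinuousLinearMap.coe_fst', ContinuousLinearMap.coe_snd',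
        smul_eq_mul]
      norm_num
      rw [← he2, ← he1]
      intro hc
      have habs : lam₀ ^ 2 * q₁ lam₀ * q₂ lam₀ = 1 := by
        linear_combination hc - (lam₀ ^ 2 * q₁ lam₀ * q₂ lam₀) * hgg
      linarith [hkey lam₀ hl₀]
    · filter_upwards [IsOpen.mem_nhds (isOpen_Ioi.prod isOpen_Ioo) (by exact ⟨hl₀, hx0, hx1⟩ :
        ((lam₀, q₁ lam₀) : ℝ × ℝ) ∈ (Set.Ioi (1:ℝ)) ×ˢ (Set.Ioo (0:ℝ) 1))] with p hp hgp
      exact hzero p.1 hp.1 p.2 hp.2.1 hp.2.2 hgp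
    · show Real.exp (lam₀ * γ * (Real.exp (lam₀ * γ⁻¹ * (q₁ lam₀ - 1)) - 1)) - q₁ lam₀ = 0
      rw [← he2, ← he1, sub_self]
  have hdiffq₂ : ∀ lam₀, 1 < lam₀ → DifferentiableAt ℝ q₂ lam₀ := by
    intro lam₀ hl₀
    have hEq : q₂ =ᶠ[nhds lam₀] fun lam => Real.exp (lam * γ⁻¹ * (q₁ lam - 1)) := by
      filter_upwards [IsOpen.mem_nhds isOpen_Ioi hl₀] with lam hlam
      exact (hsol lam hlam).2.2.2
    have hdiff : DifferentiableAt ℝ (fun lam => Real.exp (lam * γ⁻¹ * (q₁ lam - 1))) lam₀ :=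
      ((differentiableAt_id.mul_const γ⁻¹).mul ((hdiffq₁ lam₀ hl₀).sub_const 1)).exp
    exact hdiff.congr_of_eventuallyEq hEq
  have hdiffℓ : ∀ lam₀ ∈ Set.Ioi (1:ℝ), DifferentiableAt ℝ ℓ lam₀ := by
    intro lam₀ hl₀
    have hfun : ℓ = fun lam => θ * (1 - q₁ lam) + (1 - θ) * (1 - q₂ lam) := funext hℓ
    rw [hfun]
    exact (((hdiffq₁ lam₀ hl₀).const_sub 1).const_mul θ).add
      (((hdiffq₂ lam₀ hl₀).const_sub 1).const_mul (1 - θ))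
  have hℓmono : StrictMonoOn ℓ (Set.Ioi 1) := by
    intro a ha b hb hab
    rw [hℓ a, hℓ b]
    have h1 := hq₁lt a b ha hab
    have h2 := hq₂lt a b ha hab
    nlinarith [mul_pos hθ0 (sub_pos.2 h1), mul_pos h1θ (sub_pos.2 h2)]
  have hℓfun : ℓ = fun lam => θ * (1 - q₁ lam) + (1 - θ) * (1 - q₂ lam) := funext hℓ
  have hℓtop : Tendsto ℓ atTop (nhds 1) := by
    have h : Tendsto (fun lam => θ * (1 - q₁ lam) + (1 - θ) * (1 - q₂ lam)) atTop
        (nhds (θ * (1 - 0) + (1 - θ) * (1 - 0))) :=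
      (tendsto_const_nhds.mul (tendsto_const_nhds.sub hq₁top)).add
        (tendsto_const_nhds.mul (tendsto_const_nhds.sub hq₂top))
    rw [hℓfun]
    convert h using 2
    ring
  have hℓzero : Tendsto ℓ (nhdsWithin 1 (Set.Ioi 1)) (nhds 0) := by
    have h : Tendsto (fun lam => θ * (1 - q₁ lam) + (1 - θ) * (1 - q₂ lam))
        (nhdsWithin 1 (Set.Ioi 1)) (nhds (θ * (1 - 1) + (1 - θ) * (1 - 1))) :=
      (tendsto_const_nhds.mul (tendsto_const_nhds.sub hq₁one)).add
        (tendsto_const_nhds.mul (tendsto_const_nhds.sub hq₂one))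
    rw [hℓfun]
    convert h using 2
    ring
  have hbij : Set.BijOn ℓ (Set.Ioi 1) (Set.Ioo 0 1) := by
    refine ⟨fun lam hlam => hl01 lam hlam, hℓmono.injOn, ?_⟩
    intro c hc
    obtain ⟨a, hac, ha1⟩ := ((hℓzero.eventually (eventually_lt_nhds hc.1)).and
      self_mem_nhdsWithin).exists
    obtain ⟨b, hbc, hba⟩ := ((hℓtop.eventually (eventually_gt_nhds hc.2)).and
      (eventually_gt_atTop a)).exists
    have ha1' : (1:ℝ) < a := ha1
    have hcont : ContinuousOn ℓ (Set.Icc a b) := by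
      intro x hx
      exact ((hdiffℓ x (lt_of_lt_of_le ha1' hx.1)).continuousAt).continuousWithinAt
    obtain ⟨d, hd, hdc⟩ := intermediate_value_Ioo (le_of_lt hba) hcont ⟨hac, hbc⟩
    exact ⟨d, lt_trans ha1' hd.1, hdc⟩
  have htid : Tendsto (fun lam : ℝ => lam) (nhdsWithin 1 (Set.Ioi 1)) (nhds 1) :=
    tendsto_id.mono_left nhdsWithin_le_nhds
  have hratio : Tendsto (fun lam => (1 - q₂ lam) / (1 - q₁ lam)) (nhdsWithin 1 (Set.Ioi 1))
      (nhds γ⁻¹) := by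
    have htt : Tendsto (fun lam : ℝ => lam * γ⁻¹ * (1 - q₁ lam)) (nhdsWithin 1 (Set.Ioi 1))
        (nhdsWithin 0 {(0:ℝ)}ᶜ) := by
      rw [tendsto_nhdsWithin_iff]
      constructor
      · have hsub : Tendsto (fun lam : ℝ => 1 - q₁ lam) (nhdsWithin 1 (Set.Ioi 1))
            (nhds (1 - 1)) := tendsto_const_nhds.sub hq₁one
        have h := (htid.mul_const γ⁻¹).mul hsub
        simpa using h
      · filter_upwards [self_mem_nhdsWithin] with lam hlam
        have hlam' : (1:ℝ) < lam := hlam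
        have h1 := (hsol lam hlam').1.2
        have hpos : 0 < lam * γ⁻¹ * (1 - q₁ lam) :=
          mul_pos (mul_pos (by linarith) hγi) (by linarith)
        simp only [Set.mem_compl_iff, Set.mem_singleton_iff]
        exact hpos.ne'
    have hcomp := aux_expratio.comp htt
    have hmul := (htid.mul_const γ⁻¹).mul hcomp
    have hmul' : Tendsto (fun lam => (lam * γ⁻¹) *
        ((1 - Real.exp (-(lam * γ⁻¹ * (1 - q₁ lam)))) / (lam * γ⁻¹ * (1 - q₁ lam))))
        (nhdsWithin 1 (Set.Ioi 1)) (nhds γ⁻¹) := by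
      simpa [Function.comp] using hmul
    refine hmul'.congr' ?_
    filter_upwards [self_mem_nhdsWithin] with lam hlam
    have hlam' : (1:ℝ) < lam := hlam
    obtain ⟨⟨hx0, hx1⟩, ⟨hy0, hy1⟩, -, he2⟩ := hsol lam hlam'
    have hexpq : Real.exp (-(lam * γ⁻¹ * (1 - q₁ lam))) = q₂ lam := by
      rw [show -(lam * γ⁻¹ * (1 - q₁ lam)) = lam * γ⁻¹ * (q₁ lam - 1) by ring, ← he2]
    rw [hexpq]
    have hq1ne : (1:ℝ) - q₁ lam ≠ 0 := ne_of_gt (by linarith)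
    have hlamne : lam ≠ 0 := by intro h; rw [h] at hlam'; linarith
    have hγne : γ ≠ 0 := hγpos.ne'
    field_simp
  have hρtend : Tendsto ρ (nhdsWithin 1 (Set.Ioi 1)) (nhds (1 + γ)⁻¹) := by
    have hden : (0:ℝ) < θ + (1 - θ) * γ⁻¹ := add_pos hθ0 (mul_pos h1θ hγi)
    have htar : Tendsto (fun lam => θ / (θ + (1 - θ) * ((1 - q₂ lam) / (1 - q₁ lam))))
        (nhdsWithin 1 (Set.Ioi 1)) (nhds (θ / (θ + (1 - θ) * γ⁻¹))) :=
      tendsto_const_nhds.div (tendsto_const_nhds.add (tendsto_const_nhds.mul hratio)) hden.ne'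
    have hval : θ / (θ + (1 - θ) * γ⁻¹) = (1 + γ)⁻¹ := by
      have hts : (1 - θ) * γ⁻¹ = θ * γ := by
        linear_combination (1 - θ) * hγinv + θ * hαθγ
      rw [hts]
      have h1γ : (0:ℝ) < 1 + γ := by linarith
      have hθne : θ ≠ 0 := hθ0.ne'
      have h1γne : (1:ℝ) + γ ≠ 0 := ne_of_gt h1γ
      field_simp
    have hev : (fun lam => θ / (θ + (1 - θ) * ((1 - q₂ lam) / (1 - q₁ lam))))
        =ᶠ[nhdsWithin 1 (Set.Ioi 1)] ρ := by
      filter_upwards [self_mem_nhdsWithin] with lam hlam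
      have hlam' : (1:ℝ) < lam := hlam
      obtain ⟨⟨hx0, hx1⟩, ⟨hy0, hy1⟩, -, -⟩ := hsol lam hlam'
      rw [hρ lam, hℓ lam]
      have hp1 : (0:ℝ) < 1 - q₁ lam := by linarith
      have hp2 : (0:ℝ) < 1 - q₂ lam := by linarith
      have hne1 : (1:ℝ) - q₁ lam ≠ 0 := ne_of_gt hp1
      have hne2 : θ * (1 - q₁ lam) + (1 - θ) * (1 - q₂ lam) ≠ 0 :=
        ne_of_gt (by nlinarith [mul_pos hθ0 hp1, mul_pos h1θ hp2])
      have hne3 : θ + (1 - θ) * ((1 - q₂ lam) / (1 - q₁ lam)) ≠ 0 :=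
        ne_of_gt (add_pos hθ0 (mul_pos h1θ (div_pos (by linarith) (by linarith))))
      field_simp
    exact hval ▸ (htar.congr' hev)
  exact ⟨parti, ⟨hdiffℓ, hℓmono, hℓzero, hℓtop, hbij⟩, hρtend⟩
end
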